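/- arXiv:1101.4739 — 6 statements merged into one kernel-verified Lean document; each statement's English description precedes it below -/
import Mathlib

section
/- Let (E,𝓛,Ē^{0,-}) be a weakly left-resolving labelled space satisfying the standing assumptions, and let 𝔄 be a C*-algebra generated by a representation {s_a, p_A} of (E,𝓛,Ē^{0,-}) such that p_A ≠ 0 for every nonempty A ∈ Ē^{0,-}. If 𝔄 is simple, then (E,𝓛,Ē^{0,-}) is strongly cofinal. -/
open scoped BigOperators

/-- The `n`-fold concatenation power of a word. -/
def wpow {A : Type*} (β : List A) : ℕ → List A
  | 0 => []
  | n + 1 => β ++ wpow β n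

/-- A word is simple if it is not a power of a strictly shorter word. -/
def SimpleWord {A : Type*} (β : List A) : Prop :=
  β ≠ [] ∧ ¬ ∃ (δ : List A) (n : ℕ), δ ≠ [] ∧ δ.length < β.length ∧ 1 ≤ n ∧ β = wpow δ n

/-- The initial segment `x_{[1,N]}` of an infinite word. -/
def finTake {A : Type*} (x : ℕ → A) (N : ℕ) : List A := List.ofFn (fun i : Fin N => x i)

/-- `x = β^∞`, the periodic infinite word with period `β`. -/
def isPowInf {A : Type*} (β : List A) (x : ℕ → A) : Prop :=
  ∃ h : β ≠ [], ∀ n : ℕ,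
    x n = β.get ⟨n % β.length, Nat.mod_lt n (List.length_pos_iff.mpr h)⟩

/-- A labelled graph: a directed graph together with a surjective labelling of edges. -/
structure LabelledGraph (V : Type*) (Ed : Type*) (A : Type*) where
  src : Ed → V
  rng : Ed → V
  lbl : Ed → A
  lbl_surj : Function.Surjective lbl

/-- A finite path (of length ≥ 1) in a directed graph. -/
structure LabelledGraph.GPath {V Ed A : Type*} (G : LabelledGraph V Ed A) where
  edges : List Ed
  ne : edges ≠ []
  chain : edges.Chain' (fun e f => G.rng e = G.src f)

/-- An infinite path in a directed graph. -/
structure LabelledGraph.GInfPath {V Ed A : Type*} (G : LabelledGraph V Ed A) where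
  edges : ℕ → Ed
  chain : ∀ n, G.rng (edges n) = G.src (edges (n + 1))

namespace LabelledGraph

variable {V Ed A : Type*}

def GPath.src {G : LabelledGraph V Ed A} (p : G.GPath) : V := G.src (p.edges.head p.ne)

def GPath.rng {G : LabelledGraph V Ed A} (p : G.GPath) : V := G.rng (p.edges.getLast p.ne)

def GPath.label {G : LabelledGraph V Ed A} (p : G.GPath) : List A := p.edges.map G.lbl

def GPath.len {G : LabelledGraph V Ed A} (p : G.GPath) : ℕ := p.edges.length

def GInfPath.src {G : LabelledGraph V Ed A} (q : G.GInfPath) : V := G.src (q.edges 0)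

def GInfPath.label {G : LabelledGraph V Ed A} (q : G.GInfPath) : ℕ → A :=
  fun n => G.lbl (q.edges n)

variable (G : LabelledGraph V Ed A)

/-- `α ∈ 𝓛(E^{≥1})`: `α` is the label of some finite path. -/
def IsLabelled (α : List A) : Prop := ∃ p : G.GPath, p.label = α

/-- `s(α)`, the set of sources of paths labelled `α`. -/
def srcSet (α : List A) : Set V := { v | ∃ p : G.GPath, p.label = α ∧ p.src = v }

/-- `r(α)`, the set of ranges of paths labelled `α`. -/
def rngSet (α : List A) : Set V := { v | ∃ p : G.GPath, p.label = α ∧ p.rng = v }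

/-- The relative range `r(S,α)` of `α` with respect to `S`. -/
def relRange (S : Set V) (α : List A) : Set V :=
  { v | ∃ p : G.GPath, p.label = α ∧ p.src ∈ S ∧ p.rng = v }

/-- `x ∈ 𝓛(E^∞)`: the infinite word `x` is the label of some infinite path. -/
def IsInfLabelled (x : ℕ → A) : Prop := ∃ q : G.GInfPath, q.label = x

/-- `s(x)` for an infinite labelled path `x`. -/
def infSrc (x : ℕ → A) : Set V := { v | ∃ q : G.GInfPath, q.label = x ∧ q.src = v }

/-- `𝓛(SE^1)`: labels of edges with source in `S`. -/
def labelsFrom (S : Set V) : Set A := { a | ∃ e : Ed, G.src e ∈ S ∧ G.lbl e = a }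

/-- `𝓛(E^1S)`: labels of edges with range in `S`. -/
def labelsInto (S : Set V) : Set A := { a | ∃ e : Ed, G.rng e ∈ S ∧ G.lbl e = a }

/-- `𝓛(SE^n)`: labels of paths of length `n` with source in `S`. -/
def nLabelsFrom (S : Set V) (n : ℕ) : Set (List A) :=
  { α | ∃ p : G.GPath, p.label = α ∧ p.src ∈ S ∧ p.len = n }

/-- `𝓛(E^{≤l}v)`: labels of paths of length at most `l` with range `v`. -/
def labelsToVtx (l : ℕ) (v : V) : Set (List A) :=
  { α | ∃ p : G.GPath, p.label = α ∧ p.len ≤ l ∧ p.rng = v }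

/-- The generalized vertex `[v]_l`. -/
def genVertex (l : ℕ) (v : V) : Set V := { w | G.labelsToVtx l w = G.labelsToVtx l v }

/-- `Ē^{0,-}`: the collection of all finite unions of generalized vertices. -/
def barE : Set (Set V) :=
  { S | ∃ (l : ℕ) (F : Finset V), 1 ≤ l ∧ S = ⋃ v ∈ F, G.genVertex l v }

/-- An accommodating set for `(E,𝓛)`. -/
structure Accommodating (B : Set (Set V)) : Prop where
  empty_mem : ∅ ∈ B
  relRange_mem : ∀ S ∈ B, ∀ α : List A, G.IsLabelled α → G.relRange S α ∈ B
  inter_mem : ∀ S ∈ B, ∀ T ∈ B, S ∩ T ∈ B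
  union_mem : ∀ S ∈ B, ∀ T ∈ B, S ∪ T ∈ B
  rng_mem : ∀ α : List A, G.IsLabelled α → G.rngSet α ∈ B

/-- `𝓔^{0,-}`: the smallest accommodating set for `(E,𝓛)`. -/
def smallestAcc : Set (Set V) :=
  { S | ∀ B : Set (Set V), G.Accommodating B → S ∈ B }

/-- The labelled space `(E,𝓛,B)` is weakly left-resolving. -/
def WeaklyLeftResolving (B : Set (Set V)) : Prop :=
  ∀ S ∈ B, ∀ T ∈ B, ∀ α : List A, G.IsLabelled α →
    G.relRange S α ∩ G.relRange T α = G.relRange (S ∩ T) α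

/-- Standing assumptions: no sinks, set-finite, receiver set-finite, and
edges are determined by source, range and label. -/
structure StandingAssumptions (B : Set (Set V)) : Prop where
  no_sinks : ∀ v : V, ∃ e : Ed, G.src e = v
  set_finite : ∀ S ∈ B, (G.labelsFrom S).Finite
  receiver_set_finite : ∀ S ∈ B, (G.labelsInto S).Finite
  edge_eq : ∀ e f : Ed, G.src e = G.src f → G.rng e = G.rng f → G.lbl e = G.lbl f → e = f

/-- `(E,𝓛,B)` is strongly cofinal. -/
def StronglyCofinal : Prop :=
  ∀ x : ℕ → A, G.IsInfLabelled x → ∀ l : ℕ, 1 ≤ l → ∀ v : V, ∀ w ∈ G.infSrc x,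
    ∃ N : ℕ, 1 ≤ N ∧ ∃ (m : ℕ) (lds : Fin m → List A),
      (∀ i, G.IsLabelled (lds i)) ∧
      G.relRange (G.genVertex 1 w) (finTake x N) ⊆ ⋃ i, G.relRange (G.genVertex l v) (lds i)

/-- `(E,𝓛,B)` is `l`-cofinal. -/
def LCofinal (l : ℕ) : Prop :=
  ∀ x : ℕ → A, G.IsInfLabelled x → ∀ v : V, ∀ w ∈ G.infSrc x,
    ∃ d : ℕ, l ≤ d ∧ ∃ N : ℕ, 1 ≤ N ∧ ∃ (m : ℕ) (lds : Fin m → List A),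
      (∀ i, G.IsLabelled (lds i)) ∧
      G.relRange (G.genVertex d w) (finTake x N) ⊆ ⋃ i, G.relRange (G.genVertex l v) (lds i)

/-- `(E,𝓛,B)` is cofinal: `l`-cofinal for all `l ≥ L`, for some `L > 0`. -/
def Cofinal : Prop := ∃ L : ℕ, 0 < L ∧ ∀ l : ℕ, L ≤ l → G.LCofinal l

/-- `α` is agreeable for `[v]_l` (the condition only involves `l`):
`α = βα' = α'γ` with `|β| = |γ| ≤ l`. -/
def Agreeable (l : ℕ) (α : List A) : Prop :=
  ∃ β α' γ : List A, G.IsLabelled β ∧ G.IsLabelled α' ∧ G.IsLabelled γ ∧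
    β.length = γ.length ∧ β.length ≤ l ∧ α = β ++ α' ∧ α = α' ++ γ

/-- `α` (a labelled path with `s(α) ∩ [v]_l ≠ ∅`) is disagreeable for `[v]_l`. -/
def DisagreeablePath (l : ℕ) (v : V) (α : List A) : Prop :=
  G.IsLabelled α ∧ (G.srcSet α ∩ G.genVertex l v).Nonempty ∧ ¬ G.Agreeable l α

/-- The generalized vertex `[v]_l` is disagreeable. -/
def DisagreeableVtx (l : ℕ) (v : V) : Prop :=
  ∃ N : ℕ, 0 < N ∧ ∀ n : ℕ, N < n →
    ∃ α : List A, n ≤ α.length ∧ G.DisagreeablePath l v α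

/-- The labelled space is disagreeable. -/
def DisagreeableSpace : Prop :=
  ∀ v : V, ∃ L : ℕ, 0 < L ∧ ∀ l : ℕ, L < l → G.DisagreeableVtx l v

/-- A representation of the labelled space `(E,𝓛,B)` in a C*-algebra `𝔄`. -/
structure Rep (B : Set (Set V)) (𝔄 : Type*) [NonUnitalCStarAlgebra 𝔄] where
  p : Set V → 𝔄
  s : A → 𝔄
  p_empty : p ∅ = 0
  p_proj : ∀ S ∈ B, star (p S) = p S ∧ p S * p S = p S
  s_pisom : ∀ a : A, s a * star (s a) * s a = s a
  p_inter : ∀ S ∈ B, ∀ T ∈ B, p (S ∩ T) = p S * p T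
  p_union : ∀ S ∈ B, ∀ T ∈ B, p (S ∪ T) = p S + p T - p (S ∩ T)
  p_s : ∀ S ∈ B, ∀ a : A, p S * s a = s a * p (G.relRange S [a])
  s_star_s : ∀ a : A, star (s a) * s a = p (G.rngSet [a])
  s_orth : ∀ a b : A, a ≠ b → star (s a) * s b = 0
  p_sum : ∀ S ∈ B, ∀ h : (G.labelsFrom S).Finite, (G.labelsFrom S).Nonempty →
    p S = ∑ a ∈ h.toFinset, s a * p (G.relRange S [a]) * star (s a)

variable {G}

/-- `s_α = s_{α_1} ⋯ s_{α_n}` for a word `α`. -/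
def Rep.sWord {B : Set (Set V)} {𝔄 : Type*} [NonUnitalCStarAlgebra 𝔄]
    (ρ : G.Rep B 𝔄) : List A → 𝔄
  | [] => 0
  | a :: rest => rest.foldl (fun x b => x * ρ.s b) (ρ.s a)

/-- The C*-algebra `𝔄` is generated by the representation `ρ`. -/
def Rep.Generates {B : Set (Set V)} {𝔄 : Type*} [NonUnitalCStarAlgebra 𝔄]
    (ρ : G.Rep B 𝔄) : Prop :=
  closure (↑(NonUnitalStarAlgebra.adjoin ℂ
    (Set.range ρ.s ∪ ρ.p '' B)) : Set 𝔄) = Set.univ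

/-- The representation `ρ` is universal. -/
def Rep.Universal {B : Set (Set V)} {𝔄 : Type*} [NonUnitalCStarAlgebra 𝔄]
    (ρ : G.Rep B 𝔄) : Prop :=
  ∀ (C : Type*) [NonUnitalCStarAlgebra C], ∀ ρ' : G.Rep B C,
    ∃ φ : 𝔄 →⋆ₙₐ[ℂ] C, (∀ a : A, φ (ρ.s a) = ρ'.s a) ∧ ∀ S ∈ B, φ (ρ.p S) = ρ'.p S

end LabelledGraph

/-- A C*-algebra is simple if its only closed two-sided ideals are `{0}` and the
whole algebra. -/
def IsSimpleCStarAlgebra (𝔄 : Type*) [NonUnitalCStarAlgebra 𝔄] : Prop :=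
  ∀ I : TwoSidedIdeal 𝔄, IsClosed (I : Set 𝔄) →
    (I : Set 𝔄) = {0} ∨ (I : Set 𝔄) = Set.univ


/-! ### Auxiliary lemmas -/

namespace LabelledGraph

variable {V Ed A : Type*} {G : LabelledGraph V Ed A}

@[simp] lemma GPath.len_label (p : G.GPath) : p.label.length = p.len := by
  simp [GPath.label, GPath.len]

/-- A single-edge path. -/
def GPath.single (G : LabelledGraph V Ed A) (e : Ed) : G.GPath :=
  ⟨[e], by simp, List.isChain_singleton _⟩

@[simp] lemma GPath.single_label (e : Ed) : (GPath.single G e).label = [G.lbl e] := rfl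
@[simp] lemma GPath.single_src (e : Ed) : (GPath.single G e).src = G.src e := rfl
@[simp] lemma GPath.single_rng (e : Ed) : (GPath.single G e).rng = G.rng e := rfl

/-- Prepend an edge to a path. -/
def GPath.cons (e : Ed) (p : G.GPath) (h : G.rng e = p.src) : G.GPath :=
  ⟨e :: p.edges, by simp, by
    rw [List.Chain', List.isChain_cons]
    refine ⟨fun y hy => ?_, p.chain⟩
    rw [List.head?_eq_head p.ne, Option.mem_some_iff] at hy
    rw [h]; exact congrArg G.src hy⟩

@[simp] lemma GPath.cons_label (e : Ed) (p : G.GPath) (h : G.rng e = p.src) :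
    (GPath.cons e p h).label = G.lbl e :: p.label := rfl

@[simp] lemma GPath.cons_src (e : Ed) (p : G.GPath) (h : G.rng e = p.src) :
    (GPath.cons e p h).src = G.src e := rfl

@[simp] lemma GPath.cons_rng (e : Ed) (p : G.GPath) (h : G.rng e = p.src) :
    (GPath.cons e p h).rng = p.rng := by
  show G.rng ((e :: p.edges).getLast (by simp)) = _
  rw [List.getLast_cons p.ne]
  rfl

/-- Split off the first edge of a path with label `a :: γ`, `γ ≠ []`. -/
lemma GPath.exists_cons (p : G.GPath) {a : A} {γ : List A} (hlab : p.label = a :: γ)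
    (hγ : γ ≠ []) :
    ∃ (e : Ed) (q : G.GPath), G.lbl e = a ∧ q.label = γ ∧ G.rng e = q.src ∧
      p.src = G.src e ∧ p.rng = q.rng := by
  obtain ⟨es, ne, ch⟩ := p
  match es, ne, ch, hlab with
  | e :: es', ne, ch, hlab =>
    simp only [GPath.label, List.map_cons, List.cons.injEq] at hlab
    have hes' : es' ≠ [] := by
      intro h; rw [h] at hlab; exact hγ hlab.2.symm
    rw [List.Chain', List.isChain_cons] at ch
    refine ⟨e, ⟨es', hes', ch.2⟩, hlab.1, hlab.2, ?_, rfl, ?_⟩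
    · refine ch.1 _ ?_
      show es'.head hes' ∈ es'.head?
      rw [List.head?_eq_head hes', Option.mem_some_iff]
    · show G.rng ((e :: es').getLast _) = _
      rw [List.getLast_cons hes']
      rfl

/-- A path with a singleton label consists of a single edge. -/
lemma GPath.label_singleton (p : G.GPath) {a : A} (h : p.label = [a]) :
    ∃ e, G.lbl e = a ∧ p.src = G.src e ∧ p.rng = G.rng e := by
  obtain ⟨es, ne, ch⟩ := p
  match es, ne, ch, h with
  | e :: es', ne, ch, h =>
    simp only [GPath.label, List.map_cons, List.cons.injEq] at h
    have hes' : es' = [] := by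
      have := congrArg List.length h.2
      simpa using List.eq_nil_of_length_eq_zero (by simpa using this)
    subst hes'
    exact ⟨e, h.1, rfl, rfl⟩

variable (G)

lemma relRange_nil (S : Set V) : G.relRange S [] = ∅ := by
  ext v
  simp only [relRange, Set.mem_setOf_eq, Set.mem_empty_iff_false, iff_false]
  rintro ⟨p, hlab, -⟩
  exact p.ne (List.map_eq_nil_iff.mp hlab)

lemma relRange_empty (α : List A) : G.relRange ∅ α = ∅ := by
  ext v
  simp only [relRange, Set.mem_setOf_eq, Set.mem_empty_iff_false, iff_false]
  rintro ⟨p, -, h, -⟩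
  exact h

lemma relRange_mono {S T : Set V} (h : S ⊆ T) (α : List A) :
    G.relRange S α ⊆ G.relRange T α := by
  rintro v ⟨p, h1, h2, h3⟩; exact ⟨p, h1, h h2, h3⟩

lemma relRange_union (S T : Set V) (α : List A) :
    G.relRange (S ∪ T) α = G.relRange S α ∪ G.relRange T α := by
  ext v
  constructor
  · rintro ⟨p, h1, (h2 | h2), h3⟩
    · exact Or.inl ⟨p, h1, h2, h3⟩
    · exact Or.inr ⟨p, h1, h2, h3⟩
  · rintro (⟨p, h1, h2, h3⟩ | ⟨p, h1, h2, h3⟩)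
    · exact ⟨p, h1, Or.inl h2, h3⟩
    · exact ⟨p, h1, Or.inr h2, h3⟩

lemma relRange_subset_rngSet (S : Set V) (α : List A) :
    G.relRange S α ⊆ G.rngSet α := by
  rintro v ⟨p, h1, -, h3⟩; exact ⟨p, h1, h3⟩

lemma relRange_cons (S : Set V) (a : A) {γ : List A} (hγ : γ ≠ []) :
    G.relRange S (a :: γ) = G.relRange (G.relRange S [a]) γ := by
  ext v
  constructor
  · rintro ⟨p, hlab, hsrc, hrng⟩
    obtain ⟨e, q, he, hq, hlink, hps, hpr⟩ := p.exists_cons hlab hγ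
    refine ⟨q, hq, ⟨GPath.single G e, by simp [he], ?_, ?_⟩, by rw [← hpr, hrng]⟩
    · rw [GPath.single_src, ← hps]; exact hsrc
    · rw [GPath.single_rng, hlink]
  · rintro ⟨q, hq, ⟨p1, h1lab, h1src, h1rng⟩, hrng⟩
    obtain ⟨e, he, hs, hr⟩ := p1.label_singleton h1lab
    refine ⟨GPath.cons e q (by rw [← hr, h1rng]), by simp [he, hq], ?_, ?_⟩
    · rw [GPath.cons_src, ← hs]; exact h1src
    · rw [GPath.cons_rng]; exact hrng

lemma rngSet_eq_relRange_univ (α : List A) : G.rngSet α = G.relRange Set.univ α := by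
  ext v
  constructor
  · rintro ⟨p, h1, h3⟩; exact ⟨p, h1, trivial, h3⟩
  · rintro ⟨p, h1, -, h3⟩; exact ⟨p, h1, h3⟩

lemma rngSet_cons (a : A) {γ : List A} (hγ : γ ≠ []) :
    G.rngSet (a :: γ) = G.relRange (G.rngSet [a]) γ := by
  rw [rngSet_eq_relRange_univ, relRange_cons G _ _ hγ, rngSet_eq_relRange_univ]

lemma relRange_append (S : Set V) {α β : List A} (hα : α ≠ []) (hβ : β ≠ []) :
    G.relRange S (α ++ β) = G.relRange (G.relRange S α) β := by
  induction α generalizing S with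
  | nil => exact absurd rfl hα
  | cons a γ ih =>
    rcases eq_or_ne γ [] with rfl | hγ
    · rw [List.singleton_append, relRange_cons G S a hβ]
    · rw [List.cons_append, relRange_cons G S a (by simp [hγ]), ih _ hγ,
        relRange_cons G S a hγ]

lemma isLabelled_of_relRange_nonempty {S : Set V} {α : List A}
    (h : (G.relRange S α).Nonempty) : G.IsLabelled α := by
  obtain ⟨v, p, h1, -, -⟩ := h
  exact ⟨p, h1⟩

lemma empty_mem_barE : (∅ : Set V) ∈ G.barE :=
  ⟨1, ∅, le_refl 1, by simp⟩

lemma genVertex_mem_barE {l : ℕ} (hl : 1 ≤ l) (v : V) : G.genVertex l v ∈ G.barE :=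
  ⟨l, {v}, hl, by simp⟩

lemma relRange_mem_barE (hacc : G.Accommodating G.barE) {S : Set V} (hS : S ∈ G.barE)
    (α : List A) : G.relRange S α ∈ G.barE := by
  rcases Set.eq_empty_or_nonempty (G.relRange S α) with h | h
  · rw [h]; exact hacc.empty_mem
  · exact hacc.relRange_mem S hS α (G.isLabelled_of_relRange_nonempty h)

lemma rngSet_mem_barE (hacc : G.Accommodating G.barE) (α : List A) :
    G.rngSet α ∈ G.barE := by
  rcases Set.eq_empty_or_nonempty (G.rngSet α) with h | h
  · rw [h]; exact hacc.empty_mem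
  · obtain ⟨v, p, h1, -⟩ := h
    exact hacc.rng_mem α ⟨p, h1⟩

lemma mem_genVertex_self (l : ℕ) (v : V) : v ∈ G.genVertex l v := rfl

lemma genVertex_eq_of_mem {l : ℕ} {v u : V} (h : u ∈ G.genVertex l v) :
    G.genVertex l u = G.genVertex l v := by
  ext z
  simp only [genVertex, Set.mem_setOf_eq] at *
  rw [h]

lemma labelsToVtx_truncate {j k : ℕ} (hjk : j ≤ k) (u : V) :
    G.labelsToVtx j u = {α ∈ G.labelsToVtx k u | α.length ≤ j} := by
  ext α
  constructor
  · rintro ⟨p, h1, h2, h3⟩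
    exact ⟨⟨p, h1, h2.trans hjk, h3⟩, by rw [← h1]; simpa using h2⟩
  · rintro ⟨⟨p, h1, h2, h3⟩, h4⟩
    refine ⟨p, h1, ?_, h3⟩
    have : p.label.length = p.len := p.len_label
    rw [h1] at this
    omega

lemma genVertex_anti {j k : ℕ} (hjk : j ≤ k) (v : V) :
    G.genVertex k v ⊆ G.genVertex j v := by
  intro u hu
  show G.labelsToVtx j u = G.labelsToVtx j v
  rw [G.labelsToVtx_truncate hjk u, G.labelsToVtx_truncate hjk v, hu]

lemma genVertex_subset_of_mem_barE {S : Set V} (hS : S ∈ G.barE) {t : V} (ht : t ∈ S) :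
    ∃ l₀, 1 ≤ l₀ ∧ ∀ k, l₀ ≤ k → G.genVertex k t ⊆ S := by
  obtain ⟨l', F, hl', rfl⟩ := hS
  refine ⟨l', hl', fun k hk => ?_⟩
  simp only [Set.mem_iUnion] at ht
  obtain ⟨v, hvF, hv⟩ := ht
  have h1 : G.genVertex l' t = G.genVertex l' v := G.genVertex_eq_of_mem hv
  intro z hz
  have : z ∈ G.genVertex l' v := h1 ▸ (G.genVertex_anti hk t hz)
  exact Set.mem_biUnion hvF this

lemma genVertex_disjoint_of_not_mem {S : Set V} (hS : S ∈ G.barE) {t : V} (ht : t ∉ S) :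
    ∃ l₀, 1 ≤ l₀ ∧ ∀ k, l₀ ≤ k → G.genVertex k t ∩ S = ∅ := by
  obtain ⟨l', F, hl', rfl⟩ := hS
  refine ⟨l', hl', fun k hk => ?_⟩
  rw [Set.eq_empty_iff_forall_notMem]
  rintro z ⟨hz1, hz2⟩
  simp only [Set.mem_iUnion] at hz2
  obtain ⟨v, hvF, hv⟩ := hz2
  have h1 : z ∈ G.genVertex l' t := G.genVertex_anti hk t hz1
  have h2 : G.genVertex l' z = G.genVertex l' v := G.genVertex_eq_of_mem hv
  have h3 : G.genVertex l' z = G.genVertex l' t := G.genVertex_eq_of_mem h1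
  apply ht
  have : t ∈ G.genVertex l' v := by
    rw [← h2, h3]; exact G.mem_genVertex_self l' t
  exact Set.mem_biUnion hvF this

end LabelledGraph
namespace LabelledGraph

section Operators

variable {V Ed A : Type*} {G : LabelledGraph V Ed A} {𝔄 : Type*} [NonUnitalCStarAlgebra 𝔄]

lemma isLabelled_single (G : LabelledGraph V Ed A) (a : A) : G.IsLabelled [a] :=
  ⟨GPath.single G (G.lbl_surj a).choose, by simp [(G.lbl_surj a).choose_spec]⟩

variable (ρ : G.Rep G.barE 𝔄)

lemma Rep.foldl_mul (l : List A) (x y : 𝔄) :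
    l.foldl (fun z b => z * ρ.s b) (x * y) = x * l.foldl (fun z b => z * ρ.s b) y := by
  induction l generalizing y with
  | nil => rfl
  | cons b l ih =>
    simp only [List.foldl_cons]
    rw [mul_assoc, ih]

@[simp] lemma Rep.sWord_single (a : A) : ρ.sWord [a] = ρ.s a := rfl

lemma Rep.sWord_cons (a : A) {γ : List A} (hγ : γ ≠ []) :
    ρ.sWord (a :: γ) = ρ.s a * ρ.sWord γ := by
  match γ, hγ with
  | c :: rest, _ =>
    show (c :: rest).foldl (fun z b => z * ρ.s b) (ρ.s a)
        = ρ.s a * rest.foldl (fun z b => z * ρ.s b) (ρ.s c)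
    simp only [List.foldl_cons]
    rw [← ρ.foldl_mul rest (ρ.s a) (ρ.s c)]

lemma Rep.sWord_append {α β : List A} (hα : α ≠ []) (hβ : β ≠ []) :
    ρ.sWord (α ++ β) = ρ.sWord α * ρ.sWord β := by
  induction α with
  | nil => exact absurd rfl hα
  | cons a γ ih =>
    rcases eq_or_ne γ [] with rfl | hγ
    · rw [List.singleton_append, ρ.sWord_cons a hβ, Rep.sWord_single]
    · rw [List.cons_append, ρ.sWord_cons a (by simp [hγ]), ih hγ,
        ρ.sWord_cons a hγ, mul_assoc]

lemma Rep.p_mul_sWord (hacc : G.Accommodating G.barE) {S : Set V} (hS : S ∈ G.barE)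
    {α : List A} (hα : α ≠ []) :
    ρ.p S * ρ.sWord α = ρ.sWord α * ρ.p (G.relRange S α) := by
  induction α generalizing S with
  | nil => exact absurd rfl hα
  | cons a γ ih =>
    rcases eq_or_ne γ [] with rfl | hγ
    · exact ρ.p_s S hS a
    · rw [ρ.sWord_cons a hγ, ← mul_assoc, ρ.p_s S hS a, mul_assoc,
        ih (G.relRange_mem_barE hacc hS [a]) hγ,
        ← mul_assoc, ← ρ.sWord_cons a hγ, ← G.relRange_cons S a hγ]

lemma Rep.sWordStar_mul_p (hacc : G.Accommodating G.barE) {S : Set V} (hS : S ∈ G.barE)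
    {α : List A} (hα : α ≠ []) :
    star (ρ.sWord α) * ρ.p S = ρ.p (G.relRange S α) * star (ρ.sWord α) := by
  have h2 := congrArg star (ρ.p_mul_sWord hacc hS hα)
  rw [star_mul, star_mul, (ρ.p_proj S hS).1, (ρ.p_proj _ (G.relRange_mem_barE hacc hS α)).1]
    at h2
  exact h2

lemma Rep.sWordStar_mul_self (hacc : G.Accommodating G.barE) {γ : List A} (hγ : γ ≠ []) :
    star (ρ.sWord γ) * ρ.sWord γ = ρ.p (G.rngSet γ) := by
  induction γ with
  | nil => exact absurd rfl hγ
  | cons a γ ih =>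
    rcases eq_or_ne γ [] with rfl | hγ'
    · exact ρ.s_star_s a
    · rw [ρ.sWord_cons a hγ', star_mul, mul_assoc, ← mul_assoc (star (ρ.s a)),
        ρ.s_star_s a, ρ.p_mul_sWord hacc (G.rngSet_mem_barE hacc [a]) hγ',
        ← mul_assoc, ih hγ', ← ρ.p_inter _ (G.rngSet_mem_barE hacc γ) _
          (G.relRange_mem_barE hacc (G.rngSet_mem_barE hacc [a]) γ),
        Set.inter_eq_self_of_subset_right (G.relRange_subset_rngSet _ _),
        ← G.rngSet_cons a hγ']

lemma Rep.sWordStar_mul_ne (hacc : G.Accommodating G.barE) {γ δ : List A}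
    (hlen : δ.length = γ.length) (hne : δ ≠ γ) (hγ : γ ≠ []) :
    star (ρ.sWord δ) * ρ.sWord γ = 0 := by
  induction γ generalizing δ with
  | nil => exact absurd rfl hγ
  | cons a γ ih =>
    match δ, hlen with
    | b :: δ', hlen =>
      have hlen' : δ'.length = γ.length := by simpa using hlen
      rcases eq_or_ne γ [] with rfl | hγ'
      · have hδ' : δ' = [] := List.eq_nil_of_length_eq_zero (by simpa using hlen')
        subst hδ'
        have hab : b ≠ a := by simpa using hne
        simpa using ρ.s_orth b a hab
      · have hδ' : δ' ≠ [] := by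
          intro h; rw [h] at hlen'; exact hγ' (List.eq_nil_of_length_eq_zero hlen'.symm)
        rw [ρ.sWord_cons a hγ', ρ.sWord_cons b hδ', star_mul, mul_assoc,
          ← mul_assoc (star (ρ.s b))]
        rcases eq_or_ne b a with rfl | hab
        · have hne' : δ' ≠ γ := by intro h; exact hne (by rw [h])
          rw [ρ.s_star_s b, ρ.p_mul_sWord hacc (G.rngSet_mem_barE hacc [b]) hγ',
            ← mul_assoc, ih hlen' hne' hγ', zero_mul]
        · rw [ρ.s_orth b a hab, zero_mul, mul_zero]

lemma Rep.sWordStar_mul_prefix (hacc : G.Accommodating G.barE) {α μ' : List A}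
    (hα : α ≠ []) (hμ' : μ' ≠ []) :
    star (ρ.sWord (α ++ μ')) * ρ.sWord α = star (ρ.sWord μ') * ρ.p (G.rngSet α) := by
  rw [ρ.sWord_append hα hμ', star_mul, mul_assoc, ρ.sWordStar_mul_self hacc hα]

lemma Rep.sWordStar_mul_nonprefix (hacc : G.Accommodating G.barE) {α μ : List A}
    (hα : α ≠ []) (hlen : α.length ≤ μ.length) (hne : μ.take α.length ≠ α) :
    star (ρ.sWord μ) * ρ.sWord α = 0 := by
  rcases eq_or_lt_of_le hlen with heq | hlt
  · have htake : μ.take α.length = μ := List.take_of_length_le (le_of_eq heq.symm)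
    rw [htake] at hne
    exact ρ.sWordStar_mul_ne hacc heq.symm hne hα
  · have hαl : 0 < α.length := List.length_pos_iff.mpr hα
    have hsplit : μ = μ.take α.length ++ μ.drop α.length := (List.take_append_drop _ μ).symm
    have htlen : (μ.take α.length).length = α.length := by
      rw [List.length_take]; omega
    have htne : μ.take α.length ≠ [] := by
      intro h; rw [h] at htlen; simp only [List.length_nil] at htlen; omega
    have hd : μ.drop α.length ≠ [] := by
      intro h
      have h2 := congrArg List.length h
      rw [List.length_drop] at h2
      simp only [List.length_nil] at h2; omega
    conv_lhs => rw [hsplit]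
    rw [ρ.sWord_append htne hd, star_mul, mul_assoc, ρ.sWordStar_mul_ne hacc htlen hne hα,
      mul_zero]

lemma Rep.norm_p_le_one {S : Set V} (hS : S ∈ G.barE) : ‖ρ.p S‖ ≤ 1 := by
  obtain ⟨h1, h2⟩ := ρ.p_proj S hS
  have h3 : ‖ρ.p S‖ * ‖ρ.p S‖ = ‖ρ.p S‖ := by
    rw [← CStarRing.norm_star_mul_self (x := ρ.p S), h1, h2]
  nlinarith [norm_nonneg (ρ.p S)]

lemma Rep.norm_p_eq_one {S : Set V} (hS : S ∈ G.barE) (h : ρ.p S ≠ 0) : ‖ρ.p S‖ = 1 := by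
  obtain ⟨h1, h2⟩ := ρ.p_proj S hS
  have h3 : ‖ρ.p S‖ * ‖ρ.p S‖ = ‖ρ.p S‖ := by
    rw [← CStarRing.norm_star_mul_self (x := ρ.p S), h1, h2]
  have h4 : ‖ρ.p S‖ ≠ 0 := norm_ne_zero_iff.mpr h
  have h5 : ‖ρ.p S‖ * ‖ρ.p S‖ = ‖ρ.p S‖ * 1 := by rw [h3, mul_one]
  exact mul_left_cancel₀ h4 h5

end Operators

end LabelledGraph
namespace LabelledGraph

section Ideal

variable {V Ed A : Type*} {G : LabelledGraph V Ed A} {𝔄 : Type*} [NonUnitalCStarAlgebra 𝔄]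

/-- `B` is contained in `C` together with finitely many relative ranges of `C`. -/
def goodFor (G : LabelledGraph V Ed A) (C B : Set V) : Prop :=
  ∃ L : List (List A), B ⊆ C ∪ ⋃ δ ∈ L, G.relRange C δ

variable (G)

lemma goodFor_self (C : Set V) : G.goodFor C C :=
  ⟨[], by simp⟩

lemma goodFor_mono {C B B' : Set V} (h : B' ⊆ B) (hB : G.goodFor C B) : G.goodFor C B' := by
  obtain ⟨L, hL⟩ := hB
  exact ⟨L, h.trans hL⟩

lemma relRange_list_biUnion {ι : Type*} (L : List ι) (g : ι → Set V) (η : List A) :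
    G.relRange (⋃ δ ∈ L, g δ) η = ⋃ δ ∈ L, G.relRange (g δ) η := by
  ext v
  constructor
  · rintro ⟨p, h1, h2, h3⟩
    simp only [Set.mem_iUnion] at h2 ⊢
    obtain ⟨i, hi, h2⟩ := h2
    exact ⟨i, hi, p, h1, h2, h3⟩
  · intro hv
    simp only [Set.mem_iUnion] at hv
    obtain ⟨i, hi, p, h1, h2, h3⟩ := hv
    exact ⟨p, h1, Set.mem_iUnion.mpr ⟨i, Set.mem_iUnion.mpr ⟨hi, h2⟩⟩, h3⟩

lemma relRange_relRange_subset (C : Set V) (δ η : List A) (hη : η ≠ []) :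
    G.relRange (G.relRange C δ) η ⊆ G.relRange C (δ ++ η) := by
  rcases eq_or_ne δ [] with rfl | hδ
  · rw [G.relRange_nil, G.relRange_empty]
    exact Set.empty_subset _
  · rw [← G.relRange_append C hδ hη]

lemma goodFor_relRange {C B : Set V} (hB : G.goodFor C B) {η : List A} (hη : η ≠ []) :
    G.goodFor C (G.relRange B η) := by
  obtain ⟨L, hL⟩ := hB
  refine ⟨η :: L.map (fun δ => δ ++ η), ?_⟩
  intro v hv
  have h1 : v ∈ G.relRange (C ∪ ⋃ δ ∈ L, G.relRange C δ) η := G.relRange_mono hL η hv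
  rw [G.relRange_union, G.relRange_list_biUnion] at h1
  rcases h1 with h1 | h1
  · exact Or.inr (Set.mem_iUnion.mpr ⟨η, Set.mem_iUnion.mpr ⟨List.mem_cons_self, h1⟩⟩)
  · simp only [Set.mem_iUnion] at h1
    obtain ⟨δ, hδL, h1⟩ := h1
    have h2 : v ∈ G.relRange C (δ ++ η) := G.relRange_relRange_subset C δ η hη h1
    refine Or.inr (Set.mem_iUnion.mpr ⟨δ ++ η, Set.mem_iUnion.mpr ⟨?_, h2⟩⟩)
    simp only [List.mem_cons, List.mem_map]
    exact Or.inr ⟨δ, hδL, rfl⟩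

variable {G}

/-- The set of "good monomials" relative to `C`. -/
def monoSet (ρ : G.Rep G.barE 𝔄) (C : Set V) : Set 𝔄 :=
  {z | ∃ B ∈ G.barE, G.goodFor C B ∧
    (z = ρ.p B ∨
     (∃ α : List A, α ≠ [] ∧ z = ρ.sWord α * ρ.p B) ∨
     (∃ β : List A, β ≠ [] ∧ z = ρ.p B * star (ρ.sWord β)) ∨
     (∃ α β : List A, α ≠ [] ∧ β ≠ [] ∧ z = ρ.sWord α * ρ.p B * star (ρ.sWord β)))}

variable (ρ : G.Rep G.barE 𝔄) (C : Set V)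

lemma monoSet_star {z : 𝔄} (hz : z ∈ monoSet ρ C) : star z ∈ monoSet ρ C := by
  obtain ⟨B, hB, hgood, hcase⟩ := hz
  have hsp := (ρ.p_proj B hB).1
  rcases hcase with rfl | ⟨α, hα, rfl⟩ | ⟨β, hβ, rfl⟩ | ⟨α, β, hα, hβ, rfl⟩
  · exact ⟨B, hB, hgood, Or.inl hsp⟩
  · refine ⟨B, hB, hgood, Or.inr (Or.inr (Or.inl ⟨α, hα, ?_⟩))⟩
    rw [star_mul, hsp]
  · refine ⟨B, hB, hgood, Or.inr (Or.inl ⟨β, hβ, ?_⟩)⟩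
    rw [star_mul, star_star, hsp]
  · refine ⟨B, hB, hgood, Or.inr (Or.inr (Or.inr ⟨β, α, hβ, hα, ?_⟩))⟩
    rw [star_mul, star_mul, star_star, hsp, mul_assoc]

lemma p_mul_p {S T : Set V} (hS : S ∈ G.barE) (hT : T ∈ G.barE) :
    ρ.p S * ρ.p T = ρ.p (S ∩ T) := (ρ.p_inter S hS T hT).symm

/-- Left multiplication by `p A` preserves monomials. -/
lemma p_mul_mono (hacc : G.Accommodating G.barE) {S : Set V} (hS : S ∈ G.barE) {z : 𝔄} (hz : z ∈ monoSet ρ C) :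
    ρ.p S * z ∈ monoSet ρ C := by
  obtain ⟨B, hB, hgood, hcase⟩ := hz
  rcases hcase with rfl | ⟨α, hα, rfl⟩ | ⟨β, hβ, rfl⟩ | ⟨α, β, hα, hβ, rfl⟩
  · exact ⟨S ∩ B, hacc.inter_mem S hS B hB,
      G.goodFor_mono Set.inter_subset_right hgood,
      Or.inl (p_mul_p ρ hS hB)⟩
  · refine ⟨G.relRange S α ∩ B,
      hacc.inter_mem _ (G.relRange_mem_barE hacc hS α) _ hB,
      G.goodFor_mono Set.inter_subset_right hgood,
      Or.inr (Or.inl ⟨α, hα, ?_⟩)⟩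
    rw [← mul_assoc, ρ.p_mul_sWord hacc hS hα, mul_assoc,
      p_mul_p ρ (G.relRange_mem_barE hacc hS α) hB]
  · refine ⟨S ∩ B, hacc.inter_mem S hS B hB,
      G.goodFor_mono Set.inter_subset_right hgood,
      Or.inr (Or.inr (Or.inl ⟨β, hβ, ?_⟩))⟩
    rw [← mul_assoc, p_mul_p ρ hS hB]
  · refine ⟨G.relRange S α ∩ B,
      hacc.inter_mem _ (G.relRange_mem_barE hacc hS α) _ hB,
      G.goodFor_mono Set.inter_subset_right hgood,
      Or.inr (Or.inr (Or.inr ⟨α, β, hα, hβ, ?_⟩))⟩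
    rw [← mul_assoc, ← mul_assoc, ρ.p_mul_sWord hacc hS hα, mul_assoc (ρ.sWord α),
      p_mul_p ρ (G.relRange_mem_barE hacc hS α) hB]

/-- Left multiplication by `s a` preserves monomials. -/
lemma s_mul_mono (a : A) {z : 𝔄} (hz : z ∈ monoSet ρ C) :
    ρ.s a * z ∈ monoSet ρ C := by
  obtain ⟨B, hB, hgood, hcase⟩ := hz
  rcases hcase with rfl | ⟨α, hα, rfl⟩ | ⟨β, hβ, rfl⟩ | ⟨α, β, hα, hβ, rfl⟩
  · exact ⟨B, hB, hgood, Or.inr (Or.inl ⟨[a], by simp, by rw [Rep.sWord_single]⟩)⟩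
  · refine ⟨B, hB, hgood, Or.inr (Or.inl ⟨a :: α, by simp, ?_⟩)⟩
    rw [ρ.sWord_cons a hα, mul_assoc]
  · refine ⟨B, hB, hgood, Or.inr (Or.inr (Or.inr ⟨[a], β, by simp, hβ, ?_⟩))⟩
    rw [Rep.sWord_single, mul_assoc]
  · refine ⟨B, hB, hgood, Or.inr (Or.inr (Or.inr ⟨a :: α, β, by simp, hβ, ?_⟩))⟩
    rw [ρ.sWord_cons a hα, mul_assoc, mul_assoc, mul_assoc]

/-- Left multiplication by `star (s a)` maps monomials into the span. -/
lemma sStar_mul_mono (hacc : G.Accommodating G.barE) (a : A) {z : 𝔄} (hz : z ∈ monoSet ρ C) :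
    star (ρ.s a) * z ∈ Submodule.span ℂ (monoSet ρ C) := by
  obtain ⟨B, hB, hgood, hcase⟩ := hz
  have hsa : star (ρ.s a) = star (ρ.sWord [a]) := by rw [Rep.sWord_single]
  rcases hcase with rfl | ⟨α, hα, rfl⟩ | ⟨β, hβ, rfl⟩ | ⟨α, β, hα, hβ, rfl⟩
  · -- star (s a) * p B = p (r(B,[a])) * star (s a)
    refine Submodule.subset_span ⟨G.relRange B [a], G.relRange_mem_barE hacc hB [a],
      G.goodFor_relRange hgood (by simp), Or.inr (Or.inr (Or.inl ⟨[a], by simp, ?_⟩))⟩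
    rw [hsa, ρ.sWordStar_mul_p hacc hB (by simp)]
  · -- star (s a) * (sWord α * p B)
    match α, hα with
    | b :: γ, _ =>
      rcases eq_or_ne γ [] with rfl | hγ
      · rcases eq_or_ne a b with rfl | hab
        · refine Submodule.subset_span ⟨G.rngSet [a] ∩ B,
            hacc.inter_mem _ (G.rngSet_mem_barE hacc [a]) _ hB,
            G.goodFor_mono Set.inter_subset_right hgood, Or.inl ?_⟩
          rw [Rep.sWord_single, ← mul_assoc, ρ.s_star_s a,
            p_mul_p ρ (G.rngSet_mem_barE hacc [a]) hB]
        · rw [Rep.sWord_single, ← mul_assoc, ρ.s_orth a b hab, zero_mul]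
          exact Submodule.zero_mem _
      · rcases eq_or_ne a b with rfl | hab
        · refine Submodule.subset_span ⟨G.relRange (G.rngSet [a]) γ ∩ B,
            hacc.inter_mem _ (G.relRange_mem_barE hacc (G.rngSet_mem_barE hacc [a]) γ) _ hB,
            G.goodFor_mono Set.inter_subset_right hgood, Or.inr (Or.inl ⟨γ, hγ, ?_⟩)⟩
          rw [ρ.sWord_cons a hγ, ← mul_assoc, ← mul_assoc, ρ.s_star_s a,
            ρ.p_mul_sWord hacc (G.rngSet_mem_barE hacc [a]) hγ, mul_assoc,
            p_mul_p ρ (G.relRange_mem_barE hacc (G.rngSet_mem_barE hacc [a]) γ) hB]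
        · rw [ρ.sWord_cons b hγ, ← mul_assoc, ← mul_assoc, ρ.s_orth a b hab, zero_mul,
            zero_mul]
          exact Submodule.zero_mem _
  · -- star (s a) * (p B * star (sWord β))
    refine Submodule.subset_span ⟨G.relRange B [a], G.relRange_mem_barE hacc hB [a],
      G.goodFor_relRange hgood (by simp),
      Or.inr (Or.inr (Or.inl ⟨β ++ [a], by simp, ?_⟩))⟩
    rw [← mul_assoc, hsa, ρ.sWordStar_mul_p hacc hB (by simp), mul_assoc, ← star_mul,
      ← ρ.sWord_append hβ (by simp)]
  · -- star (s a) * (sWord α * p B * star (sWord β))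
    match α, hα with
    | b :: γ, _ =>
      rcases eq_or_ne γ [] with rfl | hγ
      · rcases eq_or_ne a b with rfl | hab
        · refine Submodule.subset_span ⟨G.rngSet [a] ∩ B,
            hacc.inter_mem _ (G.rngSet_mem_barE hacc [a]) _ hB,
            G.goodFor_mono Set.inter_subset_right hgood,
            Or.inr (Or.inr (Or.inl ⟨β, hβ, ?_⟩))⟩
          rw [Rep.sWord_single, ← mul_assoc, ← mul_assoc, ρ.s_star_s a, mul_assoc,
            ← mul_assoc (ρ.p (G.rngSet [a])), p_mul_p ρ (G.rngSet_mem_barE hacc [a]) hB]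
        · rw [Rep.sWord_single, ← mul_assoc, ← mul_assoc, ρ.s_orth a b hab, zero_mul,
            zero_mul]
          exact Submodule.zero_mem _
      · rcases eq_or_ne a b with rfl | hab
        · refine Submodule.subset_span ⟨G.relRange (G.rngSet [a]) γ ∩ B,
            hacc.inter_mem _ (G.relRange_mem_barE hacc (G.rngSet_mem_barE hacc [a]) γ) _ hB,
            G.goodFor_mono Set.inter_subset_right hgood,
            Or.inr (Or.inr (Or.inr ⟨γ, β, hγ, hβ, ?_⟩))⟩
          rw [ρ.sWord_cons a hγ, ← mul_assoc, ← mul_assoc, ← mul_assoc, ρ.s_star_s a,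
            mul_assoc (ρ.p (G.rngSet [a]) * ρ.sWord γ),
            ρ.p_mul_sWord hacc (G.rngSet_mem_barE hacc [a]) hγ,
            mul_assoc (ρ.sWord γ), ← mul_assoc (ρ.p (G.relRange (G.rngSet [a]) γ)),
            p_mul_p ρ (G.relRange_mem_barE hacc (G.rngSet_mem_barE hacc [a]) γ) hB,
            ← mul_assoc]
        · rw [ρ.sWord_cons b hγ, ← mul_assoc, ← mul_assoc, ← mul_assoc, ρ.s_orth a b hab,
            zero_mul, zero_mul, zero_mul]
          exact Submodule.zero_mem _

end Ideal

end LabelledGraph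
namespace LabelledGraph

section Span

variable {V Ed A : Type*} {G : LabelledGraph V Ed A} {𝔄 : Type*} [NonUnitalCStarAlgebra 𝔄]
variable (ρ : G.Rep G.barE 𝔄) (C : Set V)

lemma span_mono_star {y : 𝔄} (hy : y ∈ Submodule.span ℂ (monoSet ρ C)) :
    star y ∈ Submodule.span ℂ (monoSet ρ C) := by
  induction hy using Submodule.span_induction with
  | mem z hz => exact Submodule.subset_span (monoSet_star ρ C hz)
  | zero => rw [star_zero]; exact Submodule.zero_mem _
  | add x y _ _ hx hy => rw [star_add]; exact Submodule.add_mem _ hx hy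
  | smul c x _ hx => rw [star_smul]; exact Submodule.smul_mem _ _ hx

lemma p_mul_span (hacc : G.Accommodating G.barE) {S : Set V} (hS : S ∈ G.barE) {y : 𝔄}
    (hy : y ∈ Submodule.span ℂ (monoSet ρ C)) :
    ρ.p S * y ∈ Submodule.span ℂ (monoSet ρ C) := by
  induction hy using Submodule.span_induction with
  | mem z hz => exact Submodule.subset_span (p_mul_mono ρ C hacc hS hz)
  | zero => rw [mul_zero]; exact Submodule.zero_mem _
  | add x y _ _ hx hy => rw [mul_add]; exact Submodule.add_mem _ hx hy
  | smul c x _ hx => rw [mul_smul_comm]; exact Submodule.smul_mem _ _ hx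

lemma s_mul_span (a : A) {y : 𝔄} (hy : y ∈ Submodule.span ℂ (monoSet ρ C)) :
    ρ.s a * y ∈ Submodule.span ℂ (monoSet ρ C) := by
  induction hy using Submodule.span_induction with
  | mem z hz => exact Submodule.subset_span (s_mul_mono ρ C a hz)
  | zero => rw [mul_zero]; exact Submodule.zero_mem _
  | add x y _ _ hx hy => rw [mul_add]; exact Submodule.add_mem _ hx hy
  | smul c x _ hx => rw [mul_smul_comm]; exact Submodule.smul_mem _ _ hx

lemma sStar_mul_span (hacc : G.Accommodating G.barE) (a : A) {y : 𝔄}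
    (hy : y ∈ Submodule.span ℂ (monoSet ρ C)) :
    star (ρ.s a) * y ∈ Submodule.span ℂ (monoSet ρ C) := by
  induction hy using Submodule.span_induction with
  | mem z hz => exact sStar_mul_mono ρ C hacc a hz
  | zero => rw [mul_zero]; exact Submodule.zero_mem _
  | add x y _ _ hx hy => rw [mul_add]; exact Submodule.add_mem _ hx hy
  | smul c x _ hx => rw [mul_smul_comm]; exact Submodule.smul_mem _ _ hx

lemma adjoin_mul_span (hacc : G.Accommodating G.barE) {x : 𝔄}
    (hx : x ∈ NonUnitalStarAlgebra.adjoin ℂ (Set.range ρ.s ∪ ρ.p '' G.barE)) :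
    ∀ y ∈ Submodule.span ℂ (monoSet ρ C),
      x * y ∈ Submodule.span ℂ (monoSet ρ C) ∧ y * x ∈ Submodule.span ℂ (monoSet ρ C) := by
  induction hx using NonUnitalStarAlgebra.adjoin_induction with
  | mem g hg =>
    intro y hy
    have hleft : g * y ∈ Submodule.span ℂ (monoSet ρ C) := by
      rcases hg with ⟨a, rfl⟩ | ⟨S, hS, rfl⟩
      · exact s_mul_span ρ C a hy
      · exact p_mul_span ρ C hacc hS hy
    refine ⟨hleft, ?_⟩
    have h2 : star g * star y ∈ Submodule.span ℂ (monoSet ρ C) := by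
      rcases hg with ⟨a, rfl⟩ | ⟨S, hS, rfl⟩
      · exact sStar_mul_span ρ C hacc a (span_mono_star ρ C hy)
      · rw [(ρ.p_proj S hS).1]
        exact p_mul_span ρ C hacc hS (span_mono_star ρ C hy)
    have h3 := span_mono_star ρ C h2
    rwa [star_mul, star_star, star_star] at h3
  | add x₁ x₂ _ _ ih₁ ih₂ =>
    intro y hy
    constructor
    · rw [add_mul]; exact Submodule.add_mem _ (ih₁ y hy).1 (ih₂ y hy).1
    · rw [mul_add]; exact Submodule.add_mem _ (ih₁ y hy).2 (ih₂ y hy).2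
  | zero =>
    intro y hy
    rw [zero_mul, mul_zero]
    exact ⟨Submodule.zero_mem _, Submodule.zero_mem _⟩
  | mul x₁ x₂ _ _ ih₁ ih₂ =>
    intro y hy
    constructor
    · rw [mul_assoc]; exact (ih₁ _ (ih₂ y hy).1).1
    · rw [← mul_assoc]; exact (ih₂ _ (ih₁ y hy).2).2
  | smul c x _ ih =>
    intro y hy
    constructor
    · rw [smul_mul_assoc]; exact Submodule.smul_mem _ _ (ih y hy).1
    · rw [mul_smul_comm]; exact Submodule.smul_mem _ _ (ih y hy).2
  | star x _ ih =>
    intro y hy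
    constructor
    · have h2 := span_mono_star ρ C (ih (star y) (span_mono_star ρ C hy)).2
      rwa [star_mul, star_star] at h2
    · have h2 := span_mono_star ρ C (ih (star y) (span_mono_star ρ C hy)).1
      rwa [star_mul, star_star] at h2

/-- The closure of the span of good monomials is a closed two-sided ideal. -/
lemma exists_ideal (hacc : G.Accommodating G.barE) (hgen : ρ.Generates) :
    ∃ I : TwoSidedIdeal 𝔄,
      (I : Set 𝔄) = closure (Submodule.span ℂ (monoSet ρ C) : Set 𝔄) := by
  set M := Submodule.span ℂ (monoSet ρ C) with hM
  have hmul : ∀ {x y : 𝔄}, y ∈ closure (M : Set 𝔄) → x * y ∈ closure (M : Set 𝔄) := by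
    intro x y hy
    have hx : x ∈ closure (↑(NonUnitalStarAlgebra.adjoin ℂ
        (Set.range ρ.s ∪ ρ.p '' G.barE)) : Set 𝔄) := by
      rw [hgen]; trivial
    exact map_mem_closure₂ continuous_mul hx hy
      (fun a ha b hb => (adjoin_mul_span ρ C hacc ha b hb).1)
  have hmulr : ∀ {x y : 𝔄}, x ∈ closure (M : Set 𝔄) → x * y ∈ closure (M : Set 𝔄) := by
    intro x y hx
    have hy : y ∈ closure (↑(NonUnitalStarAlgebra.adjoin ℂ
        (Set.range ρ.s ∪ ρ.p '' G.barE)) : Set 𝔄) := by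
      rw [hgen]; trivial
    exact map_mem_closure₂ continuous_mul hx hy
      (fun a ha b hb => (adjoin_mul_span ρ C hacc hb a ha).2)
  refine ⟨TwoSidedIdeal.mk' (closure (M : Set 𝔄))
    (subset_closure (Submodule.zero_mem M))
    (fun hx hy => ?_) (fun hx => ?_) (fun hy => hmul hy) (fun hx => hmulr hx), ?_⟩
  · exact map_mem_closure₂ continuous_add hx hy (fun a ha b hb => Submodule.add_mem M ha hb)
  · have : Continuous (fun z : 𝔄 => -z) := continuous_neg
    exact map_mem_closure this hx (fun a ha => Submodule.neg_mem M ha)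
  · ext z
    rw [SetLike.mem_coe, TwoSidedIdeal.mem_mk']

end Span

end LabelledGraph
namespace LabelledGraph

section Key

variable {V Ed A : Type*} {G : LabelledGraph V Ed A} {𝔄 : Type*} [NonUnitalCStarAlgebra 𝔄]
variable (ρ : G.Rep G.barE 𝔄) (C : Set V)

/-- Normalized data for a monomial. -/
lemma mono_data {z : 𝔄} (hz : z ∈ monoSet ρ C) :
    ∃ (α β : List A) (B : Set V) (L : List (List A)), B ∈ G.barE ∧
      (B ⊆ C ∪ ⋃ δ ∈ L, G.relRange C δ) ∧
      ((α = [] ∧ β = [] ∧ z = ρ.p B) ∨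
       (α ≠ [] ∧ β = [] ∧ z = ρ.sWord α * ρ.p B) ∨
       (α = [] ∧ β ≠ [] ∧ z = ρ.p B * star (ρ.sWord β)) ∨
       (α ≠ [] ∧ β ≠ [] ∧ z = ρ.sWord α * ρ.p B * star (ρ.sWord β))) := by
  obtain ⟨B, hB, ⟨L, hL⟩, hcase⟩ := hz
  rcases hcase with rfl | ⟨α, hα, rfl⟩ | ⟨β, hβ, rfl⟩ | ⟨α, β, hα, hβ, rfl⟩
  · exact ⟨[], [], B, L, hB, hL, Or.inl ⟨rfl, rfl, rfl⟩⟩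
  · exact ⟨α, [], B, L, hB, hL, Or.inr (Or.inl ⟨hα, rfl, rfl⟩)⟩
  · exact ⟨[], β, B, L, hB, hL, Or.inr (Or.inr (Or.inl ⟨rfl, hβ, rfl⟩))⟩
  · exact ⟨α, β, B, L, hB, hL, Or.inr (Or.inr (Or.inr ⟨hα, hβ, rfl⟩))⟩

variable {C}

lemma disj_of_cover {D X : Set V} {L : List (List A)}
    (hX : X ⊆ C ∪ ⋃ δ ∈ L, G.relRange C δ) {η : List A}
    (h1 : D ∩ G.relRange C η = ∅) (h2 : ∀ δ ∈ L, D ∩ G.relRange C (δ ++ η) = ∅) :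
    D ∩ G.relRange X η = ∅ := by
  rw [Set.eq_empty_iff_forall_notMem]
  rintro z ⟨hzD, hzX⟩
  have hmem : z ∈ G.relRange (C ∪ ⋃ δ ∈ L, G.relRange C δ) η := G.relRange_mono hX η hzX
  rw [G.relRange_union, G.relRange_list_biUnion] at hmem
  rcases hmem with hmem | hmem
  · exact absurd (Set.mem_inter hzD hmem) (by rw [h1]; exact Set.notMem_empty z)
  · simp only [Set.mem_iUnion] at hmem
    obtain ⟨δ, hδL, hmem⟩ := hmem
    rcases eq_or_ne η [] with rfl | hη
    · rw [G.relRange_nil] at hmem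
      exact hmem
    · have : z ∈ G.relRange C (δ ++ η) := G.relRange_relRange_subset C δ η hη hmem
      exact absurd (Set.mem_inter hzD this) (by rw [h2 δ hδL]; exact Set.notMem_empty z)

lemma kill (hacc : G.Accommodating G.barE) {D X : Set V} (hD : D ∈ G.barE)
    (hX : X ∈ G.barE) {η : List A} (hη : η ≠ [])
    (hdisj : D ∩ G.relRange X η = ∅) :
    ρ.p D * star (ρ.sWord η) * ρ.p X = 0 := by
  have h1 : ρ.p X * ρ.sWord η * ρ.p D = 0 := by
    rw [ρ.p_mul_sWord hacc hX hη, mul_assoc,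
      p_mul_p ρ (G.relRange_mem_barE hacc hX η) hD,
      show G.relRange X η ∩ D = ∅ from by rwa [Set.inter_comm] at hdisj,
      ρ.p_empty, mul_zero]
  have h2 := congrArg star h1
  rw [star_zero, star_mul, star_mul, (ρ.p_proj X hX).1, (ρ.p_proj D hD).1] at h2
  rwa [← mul_assoc] at h2

/-- Kernel computation A: `p_D (s_μ)^* p_B = 0`. -/
lemma kernelA (hacc : G.Accommodating G.barE) {D B : Set V} (hD : D ∈ G.barE)
    (hB : B ∈ G.barE) {L : List (List A)} (hBL : B ⊆ C ∪ ⋃ δ ∈ L, G.relRange C δ)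
    {μ : List A} (hμ : μ ≠ [])
    (h1 : D ∩ G.relRange C μ = ∅) (h2 : ∀ δ ∈ L, D ∩ G.relRange C (δ ++ μ) = ∅) :
    ρ.p D * star (ρ.sWord μ) * ρ.p B = 0 :=
  kill ρ hacc hD hB hμ (disj_of_cover hBL h1 h2)

/-- Kernel computation B: `p_D (s_μ)^* (s_α p_B) = 0` for `|α| < |μ|`. -/
lemma kernelB (hacc : G.Accommodating G.barE) {D B : Set V} (hD : D ∈ G.barE)
    (hB : B ∈ G.barE) {L : List (List A)} (hBL : B ⊆ C ∪ ⋃ δ ∈ L, G.relRange C δ)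
    {μ α : List A} (hα : α ≠ []) (hαlen : α.length < μ.length)
    (h1 : D ∩ G.relRange C (μ.drop α.length) = ∅)
    (h2 : ∀ δ ∈ L, D ∩ G.relRange C (δ ++ μ.drop α.length) = ∅) :
    (ρ.p D * star (ρ.sWord μ)) * (ρ.sWord α * ρ.p B) = 0 := by
  by_cases hpre : μ.take α.length = α
  · have hμ₁ : μ.drop α.length ≠ [] := by
      intro h
      have := congrArg List.length h
      rw [List.length_drop] at this
      simp only [List.length_nil] at this
      omega
    have hsplit : μ = α ++ μ.drop α.length := by
      conv_lhs => rw [← List.take_append_drop α.length μ]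
      rw [hpre]
    have hred : star (ρ.sWord μ) * ρ.sWord α
        = star (ρ.sWord (μ.drop α.length)) * ρ.p (G.rngSet α) := by
      conv_lhs => rw [hsplit]
      exact ρ.sWordStar_mul_prefix hacc hα hμ₁
    have hXmem : G.rngSet α ∩ B ∈ G.barE :=
      hacc.inter_mem _ (G.rngSet_mem_barE hacc α) _ hB
    have hdisj : D ∩ G.relRange (G.rngSet α ∩ B) (μ.drop α.length) = ∅ :=
      disj_of_cover (Set.inter_subset_right.trans hBL) h1 h2
    calc (ρ.p D * star (ρ.sWord μ)) * (ρ.sWord α * ρ.p B)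
        = ρ.p D * (star (ρ.sWord μ) * ρ.sWord α) * ρ.p B := by
          rw [mul_assoc, mul_assoc, mul_assoc]
      _ = ρ.p D * (star (ρ.sWord (μ.drop α.length)) * ρ.p (G.rngSet α)) * ρ.p B := by
          rw [hred]
      _ = (ρ.p D * star (ρ.sWord (μ.drop α.length))) * (ρ.p (G.rngSet α) * ρ.p B) := by
          rw [mul_assoc, mul_assoc, mul_assoc]
      _ = ρ.p D * star (ρ.sWord (μ.drop α.length)) * ρ.p (G.rngSet α ∩ B) := by
          rw [p_mul_p ρ (G.rngSet_mem_barE hacc α) hB, mul_assoc]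
      _ = 0 := kill ρ hacc hD hXmem hμ₁ hdisj
  · have hred : star (ρ.sWord μ) * ρ.sWord α = 0 :=
      ρ.sWordStar_mul_nonprefix hacc hα (le_of_lt hαlen) hpre
    calc (ρ.p D * star (ρ.sWord μ)) * (ρ.sWord α * ρ.p B)
        = ρ.p D * ((star (ρ.sWord μ) * ρ.sWord α) * ρ.p B) := by
          rw [mul_assoc, mul_assoc]
      _ = 0 := by rw [hred, zero_mul, mul_zero]

/-- Any monomial with short words is killed by the compression. -/
lemma mono_killed (hacc : G.Accommodating G.barE) {D B : Set V} (hD : D ∈ G.barE)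
    (hB : B ∈ G.barE) {L : List (List A)} (hBL : B ⊆ C ∪ ⋃ δ ∈ L, G.relRange C δ)
    {μ α β : List A} {z : 𝔄}
    (hcase : (α = [] ∧ β = [] ∧ z = ρ.p B) ∨
       (α ≠ [] ∧ β = [] ∧ z = ρ.sWord α * ρ.p B) ∨
       (α = [] ∧ β ≠ [] ∧ z = ρ.p B * star (ρ.sWord β)) ∨
       (α ≠ [] ∧ β ≠ [] ∧ z = ρ.sWord α * ρ.p B * star (ρ.sWord β)))
    (hαlen : α.length < μ.length) (hβlen : β.length < μ.length)
    (h1 : D ∩ G.relRange C (μ.drop α.length) = ∅)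
    (h2 : ∀ δ ∈ L, D ∩ G.relRange C (δ ++ μ.drop α.length) = ∅) :
    (ρ.p D * star (ρ.sWord μ)) * z * (ρ.sWord μ * ρ.p D) = 0 := by
  have hμ : μ ≠ [] := by
    intro h; rw [h] at hαlen; simp at hαlen
  rcases hcase with ⟨hα, hβ, rfl⟩ | ⟨hα, hβ, rfl⟩ | ⟨hα, hβ, rfl⟩ | ⟨hα, hβ, rfl⟩
  · subst hα
    simp only [List.length_nil, List.drop_zero] at h1 h2
    have := kernelA ρ hacc hD hB hBL hμ h1 h2
    rw [show ρ.p D * star (ρ.sWord μ) * ρ.p B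
        = (ρ.p D * star (ρ.sWord μ)) * ρ.p B from rfl] at this
    rw [this, zero_mul]
  · have := kernelB ρ hacc hD hB hBL hα hαlen h1 h2
    rw [this, zero_mul]
  · subst hα
    simp only [List.length_nil, List.drop_zero] at h1 h2
    have hA := kernelA ρ hacc hD hB hBL hμ h1 h2
    calc (ρ.p D * star (ρ.sWord μ)) * (ρ.p B * star (ρ.sWord β)) * (ρ.sWord μ * ρ.p D)
        = ((ρ.p D * star (ρ.sWord μ)) * ρ.p B) * star (ρ.sWord β) * (ρ.sWord μ * ρ.p D) := by
          simp only [mul_assoc]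
      _ = 0 := by rw [show (ρ.p D * star (ρ.sWord μ)) * ρ.p B = 0 from hA, zero_mul, zero_mul]
  · have hBk := kernelB ρ hacc hD hB hBL hα hαlen h1 h2
    calc (ρ.p D * star (ρ.sWord μ)) * (ρ.sWord α * ρ.p B * star (ρ.sWord β)) * (ρ.sWord μ * ρ.p D)
        = ((ρ.p D * star (ρ.sWord μ)) * (ρ.sWord α * ρ.p B)) * star (ρ.sWord β)
            * (ρ.sWord μ * ρ.p D) := by
          simp only [mul_assoc]
      _ = 0 := by rw [hBk, zero_mul, zero_mul]

lemma Rep.norm_sWord_le_one (hacc : G.Accommodating G.barE) {μ : List A} (hμ : μ ≠ []) :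
    ‖ρ.sWord μ‖ ≤ 1 := by
  have h1 : ‖ρ.sWord μ‖ * ‖ρ.sWord μ‖ = ‖ρ.p (G.rngSet μ)‖ := by
    rw [← CStarRing.norm_star_mul_self, ρ.sWordStar_mul_self hacc hμ]
  have h2 := ρ.norm_p_le_one (G.rngSet_mem_barE hacc μ)
  nlinarith [norm_nonneg (ρ.sWord μ)]

end Key

end LabelledGraph
namespace LabelledGraph

section Fin

variable {V Ed A : Type*} {G : LabelledGraph V Ed A}

lemma list_head_eq_get {α : Type*} (l : List α) (h : l ≠ []) :
    l.head h = l.get ⟨0, List.length_pos_iff.mpr h⟩ := by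
  cases l with
  | nil => exact absurd rfl h
  | cons a t => rfl

lemma exists_prefix_path (q : G.GInfPath) (N : ℕ) :
    ∃ p : G.GPath, p.label = finTake q.label (N + 1) ∧ p.src = q.src := by
  have hne : (List.ofFn fun i : Fin (N + 1) => q.edges i) ≠ [] := by
    intro h
    have := congrArg List.length h
    simp at this
  have hch : (List.ofFn fun i : Fin (N + 1) => q.edges i).Chain'
      (fun e f => G.rng e = G.src f) := by
    rw [List.Chain', List.isChain_iff_getElem]
    intro i hi
    simp only [List.length_ofFn] at hi
    simp only [List.getElem_ofFn]
    have := q.chain i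
    simpa using this
  refine ⟨⟨List.ofFn fun i : Fin (N + 1) => q.edges i, hne, hch⟩, ?_, ?_⟩
  · show List.map G.lbl _ = _
    rw [List.map_ofFn]
    rfl
  · show G.src ((List.ofFn fun i : Fin (N + 1) => q.edges i).head hne) = _
    rw [list_head_eq_get _ hne, List.get_ofFn]
    rfl

lemma exists_disjoint_level (hacc : G.Accommodating G.barE) {C : Set V} (hC : C ∈ G.barE)
    (t : V) (lst : List (List A)) (ht : ∀ η ∈ lst, t ∉ G.relRange C η) :
    ∃ l₀, 1 ≤ l₀ ∧ ∀ k, l₀ ≤ k → ∀ η ∈ lst, G.genVertex k t ∩ G.relRange C η = ∅ := by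
  induction lst with
  | nil => exact ⟨1, le_refl 1, fun k _ η hη => absurd hη List.not_mem_nil⟩
  | cons η₀ rest ih =>
    obtain ⟨l₁, hl₁, h₁⟩ := ih (fun η hη => ht η (List.mem_cons_of_mem _ hη))
    obtain ⟨l₂, hl₂, h₂⟩ := G.genVertex_disjoint_of_not_mem
      (G.relRange_mem_barE hacc hC η₀) (ht η₀ List.mem_cons_self)
    refine ⟨max l₁ l₂, le_trans hl₁ (le_max_left _ _), fun k hk η hη => ?_⟩
    rcases List.mem_cons.mp hη with rfl | hη
    · exact h₂ k (le_trans (le_max_right _ _) hk)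
    · exact h₁ k (le_trans (le_max_left _ _) hk) η hη

end Fin

end LabelledGraph
/-- If the C*-algebra generated by a representation of the weakly
left-resolving labelled space `(E,𝓛,Ē^{0,-})` (with all projections of nonempty
sets nonzero) is simple, then `(E,𝓛,Ē^{0,-})` is strongly cofinal. -/
theorem simple_implies_stronglyCofinal
    {V Ed A : Type*} [Countable A] (G : LabelledGraph V Ed A)
    (hacc : G.Accommodating G.barE)
    (hwlr : G.WeaklyLeftResolving G.barE)
    (hsa : G.StandingAssumptions G.barE)
    (𝔄 : Type*) [NonUnitalCStarAlgebra 𝔄]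
    (ρ : G.Rep G.barE 𝔄) (hgen : ρ.Generates)
    (hnz : ∀ S ∈ G.barE, S.Nonempty → ρ.p S ≠ 0)
    (hsimple : IsSimpleCStarAlgebra 𝔄) :
    G.StronglyCofinal := by
  classical
  open LabelledGraph in
  by_contra hnc
  rw [LabelledGraph.StronglyCofinal] at hnc
  push_neg at hnc
  obtain ⟨x, hx, l, hl, v, w, hw, hfail⟩ := hnc
  have hfail2 : ∀ N : ℕ, 1 ≤ N → ∀ (m : ℕ) (lds : Fin m → List A),
      (∀ i, G.IsLabelled (lds i)) →
      ¬ G.relRange (G.genVertex 1 w) (finTake x N) ⊆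
        ⋃ i, G.relRange (G.genVertex l v) (lds i) := hfail
  clear hfail
  -- notation
  have hW : G.genVertex 1 w ∈ G.barE := G.genVertex_mem_barE (le_refl 1) w
  have hCv : G.genVertex l v ∈ G.barE := G.genVertex_mem_barE hl v
  -- the closed two-sided ideal generated by the good monomials
  obtain ⟨I, hI⟩ := LabelledGraph.exists_ideal ρ (G.genVertex l v) hacc hgen
  have hclosed : IsClosed (I : Set 𝔄) := by rw [hI]; exact isClosed_closure
  rcases hsimple I hclosed with h0 | huniv
  · -- the ideal contains the nonzero projection p_{[v]_l}
    have hpC : ρ.p (G.genVertex l v) ∈ (I : Set 𝔄) := by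
      rw [hI]
      exact subset_closure (Submodule.subset_span
        ⟨G.genVertex l v, hCv, G.goodFor_self (G.genVertex l v), Or.inl rfl⟩)
    rw [h0] at hpC
    exact hnz _ hCv ⟨v, G.mem_genVertex_self l v⟩ hpC
  -- hence the span of good monomials is dense
  have hdense : ∀ z : 𝔄,
      z ∈ closure ((Submodule.span ℂ (LabelledGraph.monoSet ρ (G.genVertex l v)) : Set 𝔄)) := by
    intro z
    rw [← hI, huniv]
    trivial
  -- approximate p_{[w]_1} within 1/2
  obtain ⟨y, hyM, hy⟩ : ∃ y ∈ Submodule.span ℂ (LabelledGraph.monoSet ρ (G.genVertex l v)),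
      ‖ρ.p (G.genVertex 1 w) - y‖ < 1/2 := by
    obtain ⟨y, hy1, hy2⟩ := Metric.mem_closure_iff.mp (hdense (ρ.p (G.genVertex 1 w)))
      (1/2) (by norm_num)
    exact ⟨y, hy1, by rwa [dist_eq_norm] at hy2⟩
  obtain ⟨c, hcsupp, hsum⟩ := Submodule.mem_span_set.mp hyM
  -- choose the data of each monomial in the support
  have hdata := fun (m : {m : 𝔄 // m ∈ c.support}) =>
    LabelledGraph.mono_data ρ (G.genVertex l v) (hcsupp m.2)
  choose αf βf Bf Lf hBmem hBsub hshape using hdata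
  -- the length bound
  set N : ℕ := 1 + Finset.univ.sup
    (fun m : {m : 𝔄 // m ∈ c.support} => max (αf m).length (βf m).length) with hNdef
  have hN1 : 1 ≤ N := Nat.le_add_right 1 _
  set μ : List A := finTake x N with hμdef
  have hμlen : μ.length = N := by simp [hμdef, finTake]
  have hμne : μ ≠ [] := by
    intro h
    rw [h] at hμlen
    simp at hμlen
    omega
  -- the finite list of words to avoid
  set Δ : List (List A) := (Finset.univ.toList (α := {m : 𝔄 // m ∈ c.support})).flatMap
    (fun m => (μ.drop (αf m).length) :: (Lf m).map (fun δ => δ ++ μ.drop (αf m).length))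
    with hΔdef
  have hmemΔ : ∀ (m : {m : 𝔄 // m ∈ c.support}),
      (μ.drop (αf m).length ∈ Δ) ∧
      (∀ δ ∈ Lf m, δ ++ μ.drop (αf m).length ∈ Δ) := by
    intro m
    constructor
    · exact List.mem_flatMap.mpr ⟨m, Finset.mem_toList.mpr (Finset.mem_univ _),
        List.mem_cons_self⟩
    · intro δ hδ
      exact List.mem_flatMap.mpr ⟨m, Finset.mem_toList.mpr (Finset.mem_univ _),
        List.mem_cons_of_mem _ (List.mem_map.mpr ⟨δ, hδ, rfl⟩)⟩
  -- apply non-cofinality to get a point avoiding all relative ranges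
  set lds : Fin Δ.length → List A :=
    fun i => if G.IsLabelled (Δ.get i) then Δ.get i else [x 0] with hldsdef
  have hldslab : ∀ i, G.IsLabelled (lds i) := by
    intro i
    rw [hldsdef]
    dsimp only
    split
    · assumption
    · exact G.isLabelled_single (x 0)
  have hnotsub := hfail2 N hN1 Δ.length lds hldslab
  rw [Set.not_subset] at hnotsub
  obtain ⟨t, htR, htU⟩ := hnotsub
  have htnot : ∀ η ∈ Δ, t ∉ G.relRange (G.genVertex l v) η := by
    intro η hη ht
    have hlab : G.IsLabelled η := G.isLabelled_of_relRange_nonempty ⟨t, ht⟩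
    obtain ⟨i, hi⟩ := List.mem_iff_get.mp hη
    apply htU
    refine Set.mem_iUnion.mpr ⟨i, ?_⟩
    have hldsi : lds i = η := by rw [hldsdef]; simp only [hi]; exact if_pos hlab
    rw [hldsi]
    exact ht
  -- pick the level k and the set D
  have hRmem : G.relRange (G.genVertex 1 w) μ ∈ G.barE := G.relRange_mem_barE hacc hW μ
  obtain ⟨l₁, hl₁, hk₁⟩ := LabelledGraph.exists_disjoint_level hacc hCv t Δ htnot
  obtain ⟨l₂, hl₂, hk₂⟩ := G.genVertex_subset_of_mem_barE hRmem htR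
  have hDmem : G.genVertex (max l₁ l₂) t ∈ G.barE :=
    G.genVertex_mem_barE (le_trans hl₁ (le_max_left _ _)) t
  have hDR : G.genVertex (max l₁ l₂) t ⊆ G.relRange (G.genVertex 1 w) μ :=
    hk₂ _ (le_max_right _ _)
  have hDdisj : ∀ η ∈ Δ, G.genVertex (max l₁ l₂) t ∩ G.relRange (G.genVertex l v) η = ∅ :=
    hk₁ _ (le_max_left _ _)
  have hpD : ρ.p (G.genVertex (max l₁ l₂) t) ≠ 0 :=
    hnz _ hDmem ⟨t, G.mem_genVertex_self _ t⟩
  -- compression computations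
  have e1 : (ρ.p (G.genVertex (max l₁ l₂) t) * star (ρ.sWord μ)) * ρ.p (G.genVertex 1 w)
      = ρ.p (G.genVertex (max l₁ l₂) t) * star (ρ.sWord μ) := by
    rw [mul_assoc, ρ.sWordStar_mul_p hacc hW hμne, ← mul_assoc,
      LabelledGraph.p_mul_p ρ hDmem hRmem, Set.inter_eq_self_of_subset_left hDR]
  have e2 : (ρ.p (G.genVertex (max l₁ l₂) t) * star (ρ.sWord μ))
      * (ρ.sWord μ * ρ.p (G.genVertex (max l₁ l₂) t))
      = ρ.p (G.genVertex (max l₁ l₂) t) := by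
    rw [mul_assoc, ← mul_assoc (star (ρ.sWord μ)), ρ.sWordStar_mul_self hacc hμne,
      ← mul_assoc, LabelledGraph.p_mul_p ρ hDmem (G.rngSet_mem_barE hacc μ),
      Set.inter_eq_self_of_subset_left (hDR.trans (G.relRange_subset_rngSet _ _)),
      (ρ.p_proj _ hDmem).2]
  have hΦW : (ρ.p (G.genVertex (max l₁ l₂) t) * star (ρ.sWord μ)) * ρ.p (G.genVertex 1 w)
      * (ρ.sWord μ * ρ.p (G.genVertex (max l₁ l₂) t))
      = ρ.p (G.genVertex (max l₁ l₂) t) := by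
    rw [e1, e2]
  have hΦy : (ρ.p (G.genVertex (max l₁ l₂) t) * star (ρ.sWord μ)) * y
      * (ρ.sWord μ * ρ.p (G.genVertex (max l₁ l₂) t)) = 0 := by
    rw [← hsum, Finsupp.sum, Finset.mul_sum, Finset.sum_mul]
    apply Finset.sum_eq_zero
    intro m hm
    have hsup : max (αf ⟨m, hm⟩).length (βf ⟨m, hm⟩).length
        ≤ Finset.univ.sup (fun m : {m : 𝔄 // m ∈ c.support} =>
          max (αf m).length (βf m).length) :=
      Finset.le_sup (f := fun m : {m : 𝔄 // m ∈ c.support} =>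
        max (αf m).length (βf m).length) (Finset.mem_univ (⟨m, hm⟩ : {m : 𝔄 // m ∈ c.support}))
    have hαl : (αf ⟨m, hm⟩).length < μ.length := by
      have h1 := le_trans (le_max_left (αf ⟨m, hm⟩).length (βf ⟨m, hm⟩).length) hsup
      rw [hμlen, hNdef]
      omega
    have hβl : (βf ⟨m, hm⟩).length < μ.length := by
      have h1 := le_trans (le_max_right (αf ⟨m, hm⟩).length (βf ⟨m, hm⟩).length) hsup
      rw [hμlen, hNdef]
      omega
    have h1m : G.genVertex (max l₁ l₂) t
        ∩ G.relRange (G.genVertex l v) (μ.drop (αf ⟨m, hm⟩).length) = ∅ :=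
      hDdisj _ (hmemΔ ⟨m, hm⟩).1
    have h2m : ∀ δ ∈ Lf ⟨m, hm⟩, G.genVertex (max l₁ l₂) t
        ∩ G.relRange (G.genVertex l v) (δ ++ μ.drop (αf ⟨m, hm⟩).length) = ∅ :=
      fun δ hδ => hDdisj _ ((hmemΔ ⟨m, hm⟩).2 δ hδ)
    have hkill := LabelledGraph.mono_killed ρ hacc hDmem (hBmem ⟨m, hm⟩)
      (hBsub ⟨m, hm⟩) (hshape ⟨m, hm⟩) hαl hβl h1m h2m
    rw [mul_smul_comm, smul_mul_assoc, hkill, smul_zero]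
  -- norm estimate
  have hn1 : ‖ρ.p (G.genVertex (max l₁ l₂) t) * star (ρ.sWord μ)‖ ≤ 1 := by
    refine le_trans (norm_mul_le _ _) ?_
    have ha := ρ.norm_p_le_one hDmem
    have hb : ‖star (ρ.sWord μ)‖ ≤ 1 := by
      rw [norm_star]
      exact ρ.norm_sWord_le_one hacc hμne
    nlinarith [norm_nonneg (ρ.p (G.genVertex (max l₁ l₂) t)), norm_nonneg (star (ρ.sWord μ))]
  have hn2 : ‖ρ.sWord μ * ρ.p (G.genVertex (max l₁ l₂) t)‖ ≤ 1 := by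
    refine le_trans (norm_mul_le _ _) ?_
    have ha := ρ.norm_p_le_one hDmem
    have hb : ‖ρ.sWord μ‖ ≤ 1 := ρ.norm_sWord_le_one hacc hμne
    nlinarith [norm_nonneg (ρ.p (G.genVertex (max l₁ l₂) t)), norm_nonneg (ρ.sWord μ)]
  have hfin : ‖ρ.p (G.genVertex (max l₁ l₂) t)‖ ≤ ‖ρ.p (G.genVertex 1 w) - y‖ := by
    have hrepr : ρ.p (G.genVertex (max l₁ l₂) t)
        = (ρ.p (G.genVertex (max l₁ l₂) t) * star (ρ.sWord μ))
          * (ρ.p (G.genVertex 1 w) - y) * (ρ.sWord μ * ρ.p (G.genVertex (max l₁ l₂) t)) := by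
      rw [mul_sub, sub_mul, hΦW, hΦy, sub_zero]
    rw [hrepr]
    calc ‖(ρ.p (G.genVertex (max l₁ l₂) t) * star (ρ.sWord μ))
          * (ρ.p (G.genVertex 1 w) - y) * (ρ.sWord μ * ρ.p (G.genVertex (max l₁ l₂) t))‖
        ≤ ‖(ρ.p (G.genVertex (max l₁ l₂) t) * star (ρ.sWord μ))
          * (ρ.p (G.genVertex 1 w) - y)‖ * ‖ρ.sWord μ * ρ.p (G.genVertex (max l₁ l₂) t)‖ :=
          norm_mul_le _ _
      _ ≤ (‖ρ.p (G.genVertex (max l₁ l₂) t) * star (ρ.sWord μ)‖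
          * ‖ρ.p (G.genVertex 1 w) - y‖) * ‖ρ.sWord μ * ρ.p (G.genVertex (max l₁ l₂) t)‖ := by
          have := norm_mul_le (ρ.p (G.genVertex (max l₁ l₂) t) * star (ρ.sWord μ))
            (ρ.p (G.genVertex 1 w) - y)
          nlinarith [norm_nonneg (ρ.sWord μ * ρ.p (G.genVertex (max l₁ l₂) t))]
      _ ≤ ‖ρ.p (G.genVertex (max l₁ l₂) t) * star (ρ.sWord μ)‖
            * ‖ρ.p (G.genVertex 1 w) - y‖ :=
          mul_le_of_le_one_right (by positivity) hn2
      _ ≤ ‖ρ.p (G.genVertex 1 w) - y‖ :=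
          mul_le_of_le_one_left (norm_nonneg _) hn1
  rw [ρ.norm_p_eq_one hDmem hpD] at hfin
  linarith
end

section
/- Let E be a locally finite directed graph (every vertex receives and emits only finitely many edges) and let (E,𝓛,Ē^{0,-}) be a weakly left-resolving labelled space satisfying the standing assumptions such that |r(a)| = ∞ for some a ∈ 𝒜, and such that for each v ∈ E^0 the generalized vertex [v]_l is finite for some l ≥ 1. Let 𝔄 be a C*-algebra generated by a representation {s_a, p_A} of (E,𝓛,Ē^{0,-}) with p_A ≠ 0 for every nonempty A ∈ Ē^{0,-}. Then for any v ∈ E^0 and l ≥ 1 with [v]_l finite, the closed two-sided ideal of 𝔄 generated by the projection p_{[v]_l} is a proper ideal (not equal to 𝔄). -/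
open scoped BigOperators

namespace IdealProperAux

open LabelledGraph Set

variable {V Ed A : Type*} {G : LabelledGraph V Ed A}

/-- Forward reachable set: vertices reachable from `K` by paths of length `≤ n`. -/
def reach (G : LabelledGraph V Ed A) (K : Set V) : ℕ → Set V
  | 0 => K
  | n + 1 => reach G K n ∪ G.rng '' {e | G.src e ∈ reach G K n}

/-- Backward reachable set: vertices from which `F` is reachable in `≤ n` steps. -/
def back (G : LabelledGraph V Ed A) (F : Set V) : ℕ → Set V
  | 0 => F
  | n + 1 => back G F n ∪ G.src '' {e | G.rng e ∈ back G F n}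

lemma reach_mono {K : Set V} : ∀ {n m : ℕ}, n ≤ m → reach G K n ⊆ reach G K m := by
  intro n m h
  induction h with
  | refl => exact subset_rfl
  | step _ ih => exact ih.trans Set.subset_union_left

lemma back_mono {F : Set V} : ∀ {n m : ℕ}, n ≤ m → back G F n ⊆ back G F m := by
  intro n m h
  induction h with
  | refl => exact subset_rfl
  | step _ ih => exact ih.trans Set.subset_union_left

lemma back_mono_set {F F' : Set V} (h : F ⊆ F') : ∀ n, back G F n ⊆ back G F' n := by
  intro n
  induction n with
  | zero => exact h
  | succ n ih =>
    exact Set.union_subset_union ih (Set.image_mono (fun e he => ih he))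

lemma subset_back {F : Set V} (n : ℕ) : F ⊆ back G F n := back_mono (Nat.zero_le n)

lemma reach_finite (h : ∀ v : V, {e : Ed | G.src e = v}.Finite) {K : Set V}
    (hK : K.Finite) : ∀ n, (reach G K n).Finite
  | 0 => hK
  | n + 1 => by
    refine (reach_finite h hK n).union (Set.Finite.image _ ?_)
    have : {e : Ed | G.src e ∈ reach G K n} = ⋃ v ∈ reach G K n, {e | G.src e = v} := by
      ext e; simp
    rw [this]
    exact (reach_finite h hK n).biUnion (fun v _ => h v)

lemma back_finite (h : ∀ v : V, {e : Ed | G.rng e = v}.Finite) {F : Set V}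
    (hF : F.Finite) : ∀ n, (back G F n).Finite
  | 0 => hF
  | n + 1 => by
    refine (back_finite h hF n).union (Set.Finite.image _ ?_)
    have : {e : Ed | G.rng e ∈ back G F n} = ⋃ v ∈ back G F n, {e | G.rng e = v} := by
      ext e; simp
    rw [this]
    exact (back_finite h hF n).biUnion (fun v _ => h v)

lemma aux_back (F : Set V) :
    ∀ (es : List Ed) (ne : es ≠ []) (_ : List.Chain' (fun e f => G.rng e = G.src f) es),
      G.rng (es.getLast ne) ∈ F → G.src (es.head ne) ∈ back G F es.length := by
  intro es
  induction es with
  | nil => intro ne; exact absurd rfl ne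
  | cons e es ih =>
    intro ne ch hF
    cases es with
    | nil =>
      simp only [List.getLast_singleton] at hF
      exact Or.inr ⟨e, hF, rfl⟩
    | cons f es' =>
      have hch := List.isChain_cons_cons.mp ch
      have hlast : (e :: f :: es').getLast ne = (f :: es').getLast (by simp) :=
        List.getLast_cons (by simp)
      have hmem := ih (by simp) hch.2 (by rw [← hlast]; exact hF)
      simp only [List.head_cons] at hmem
      exact Or.inr ⟨e, show G.rng e ∈ _ by rw [hch.1]; exact hmem, rfl⟩

lemma aux_reach (K : Set V) :
    ∀ (es : List Ed) (ne : es ≠ []) (_ : List.Chain' (fun e f => G.rng e = G.src f) es)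
      (m : ℕ), G.src (es.head ne) ∈ reach G K m →
      G.rng (es.getLast ne) ∈ reach G K (m + es.length) := by
  intro es
  induction es with
  | nil => intro ne; exact absurd rfl ne
  | cons e es ih =>
    intro ne ch m hm
    cases es with
    | nil =>
      simp only [List.getLast_singleton]
      exact Or.inr ⟨e, hm, rfl⟩
    | cons f es' =>
      have hch := List.isChain_cons_cons.mp ch
      have hf : G.src f ∈ reach G K (m + 1) := by
        rw [← hch.1]; exact Or.inr ⟨e, hm, rfl⟩
      have := ih (by simp) hch.2 (m + 1) (by simpa using hf)
      have hlast : (e :: f :: es').getLast ne = (f :: es').getLast (by simp) :=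
        List.getLast_cons (by simp)
      rw [hlast]
      have harith : m + 1 + (f :: es').length = m + (e :: f :: es').length := by
        simp; omega
      rw [← harith]
      exact this

lemma GPath.len_label (p : G.GPath) : p.label.length = p.len := by
  simp [LabelledGraph.GPath.label, LabelledGraph.GPath.len]

lemma src_mem_back (p : G.GPath) (F : Set V) (h : p.rng ∈ F) :
    p.src ∈ back G F p.len :=
  aux_back F p.edges p.ne p.chain h

lemma rng_mem_reach (p : G.GPath) {K : Set V} {m : ℕ} (h : p.src ∈ reach G K m) :
    p.rng ∈ reach G K (m + p.len) :=
  aux_reach K p.edges p.ne p.chain m h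

lemma relRange_subset_reach {B K : Set V} {k : ℕ} {β : List A}
    (hB : B ⊆ reach G K k) : G.relRange B β ⊆ reach G K (k + β.length) := by
  rintro v ⟨p, hl, hs, rfl⟩
  have hlen : β.length = p.len := by rw [← hl]; exact GPath.len_label p
  rw [hlen]
  exact rng_mem_reach p (hB hs)

lemma exists_back_of_relRange {C : Set V} {β : List A} {v : V} {F : Set V}
    (hv : v ∈ G.relRange C β) (hvF : v ∈ F) : ∃ u ∈ C, u ∈ back G F β.length := by
  obtain ⟨p, hl, hs, hr⟩ := hv
  have hlen : β.length = p.len := by rw [← hl]; exact GPath.len_label p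
  exact ⟨p.src, hs, by rw [hlen]; exact src_mem_back p F (hr ▸ hvF)⟩

end IdealProperAux
namespace IdealProperAux

variable {V Ed A : Type*} {G : LabelledGraph V Ed A}

/-- `relR S β` is `S` for the empty word and `r(S,β)` otherwise. -/
def relR (G : LabelledGraph V Ed A) (S : Set V) : List A → Set V
  | [] => S
  | a :: β => G.relRange S (a :: β)

lemma isLabelled_single (a : A) : G.IsLabelled [a] := by
  obtain ⟨e, he⟩ := G.lbl_surj a
  exact ⟨⟨[e], by simp, List.isChain_singleton e⟩, by simp [LabelledGraph.GPath.label, he]⟩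

lemma relRange_cons {S : Set V} {b : A} {β : List A} (hβ : β ≠ []) :
    G.relRange S (b :: β) = G.relRange (G.relRange S [b]) β := by
  ext v
  constructor
  · rintro ⟨p, hl, hs, hr⟩
    obtain ⟨es, ne, ch⟩ := p
    cases es with
    | nil => exact absurd rfl ne
    | cons e es' =>
      simp only [LabelledGraph.GPath.label, List.map_cons, List.cons.injEq] at hl
      have hes' : es' ≠ [] := by
        intro h
        rw [h] at hl
        exact hβ (by simpa using hl.2.symm)
      have hhead : G.rng e = G.src (es'.head hes') := by
        have h1 := (List.isChain_cons.mp ch).1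
        exact h1 _ (by rw [List.head?_eq_head hes']; rfl)
      refine ⟨⟨es', hes', (List.isChain_cons.mp ch).2⟩, ?_, ?_, ?_⟩
      · simpa [LabelledGraph.GPath.label] using hl.2
      · refine ⟨⟨[e], by simp, List.isChain_singleton e⟩, ?_, ?_, ?_⟩
        · simp [LabelledGraph.GPath.label, hl.1]
        · simpa [LabelledGraph.GPath.src] using hs
        · simp only [LabelledGraph.GPath.rng, LabelledGraph.GPath.src, List.getLast_singleton]
          exact hhead
      · simpa [LabelledGraph.GPath.rng, List.getLast_cons hes'] using hr
  · rintro ⟨q, hql, hqs, hqr⟩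
    obtain ⟨p1, h1l, h1s, h1r⟩ := hqs
    obtain ⟨es1, ne1, ch1⟩ := p1
    cases es1 with
    | nil => exact absurd rfl ne1
    | cons e rest =>
      simp only [LabelledGraph.GPath.label, List.map_cons, List.cons.injEq] at h1l
      have hrest : rest = [] := List.map_eq_nil_iff.mp h1l.2
      subst hrest
      refine ⟨⟨e :: q.edges, by simp, ?_⟩, ?_, ?_, ?_⟩
      · refine List.isChain_cons.mpr ⟨?_, q.chain⟩
        intro y hy
        rw [List.head?_eq_head q.ne] at hy
        obtain rfl : y = q.edges.head q.ne := by injection hy with h; exact h.symm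
        have : G.rng e = q.src := by
          simpa [LabelledGraph.GPath.rng, List.getLast_singleton] using h1r
        exact this
      · simp only [LabelledGraph.GPath.label, List.map_cons, h1l.1]
        rw [show q.edges.map G.lbl = β from hql]
      · simpa [LabelledGraph.GPath.src] using h1s
      · simp only [LabelledGraph.GPath.rng]
        rw [List.getLast_cons q.ne]
        exact hqr

lemma relR_relRange_single (S : Set V) (b : A) (β : List A) :
    relR G (G.relRange S [b]) β = G.relRange S (b :: β) := by
  cases β with
  | nil => rfl
  | cons a β' => exact (relRange_cons (by simp)).symm

/-- membership of `[v]_l` in `barE` -/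
lemma genVertex_mem_barE {l : ℕ} (hl : 1 ≤ l) (v : V) : G.genVertex l v ∈ G.barE :=
  ⟨l, {v}, hl, by simp⟩

lemma relRange_mem_barE (hacc : G.Accommodating G.barE) {S : Set V}
    (hS : S ∈ G.barE) (β : List A) : G.relRange S β ∈ G.barE := by
  by_cases h : G.IsLabelled β
  · exact hacc.relRange_mem S hS β h
  · have : G.relRange S β = ∅ := by
      ext u
      simp only [Set.mem_empty_iff_false, iff_false]
      rintro ⟨p, hl, -, -⟩
      exact h ⟨p, hl⟩
    rw [this]
    exact hacc.empty_mem

lemma relR_mem_barE (hacc : G.Accommodating G.barE) {S : Set V}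
    (hS : S ∈ G.barE) (β : List A) : relR G S β ∈ G.barE := by
  cases β with
  | nil => exact hS
  | cons a β' => exact relRange_mem_barE hacc hS _

lemma rngSet_mem_barE (hacc : G.Accommodating G.barE) (a : A) :
    G.rngSet [a] ∈ G.barE :=
  hacc.rng_mem [a] (isLabelled_single a)

/-- characterization of `labelsToVtx` at a lower level -/
lemma labelsToVtx_le {l L : ℕ} (hlL : l ≤ L) (u : V) (α : List A) :
    α ∈ G.labelsToVtx l u ↔ α ∈ G.labelsToVtx L u ∧ α.length ≤ l := by
  constructor
  · rintro ⟨p, hpl, hplen, hpr⟩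
    refine ⟨⟨p, hpl, hplen.trans hlL, hpr⟩, ?_⟩
    rw [← hpl, GPath.len_label]
    exact hplen
  · rintro ⟨⟨p, hpl, hplen, hpr⟩, hal⟩
    refine ⟨p, hpl, ?_, hpr⟩
    rw [← GPath.len_label, hpl]
    exact hal

lemma genVertex_antitone {l L : ℕ} (hlL : l ≤ L) (w : V) :
    G.genVertex L w ⊆ G.genVertex l w := by
  intro u hu
  have hu' : G.labelsToVtx L u = G.labelsToVtx L w := hu
  show G.labelsToVtx l u = G.labelsToVtx l w
  ext α
  rw [labelsToVtx_le hlL, labelsToVtx_le hlL, hu']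

lemma mem_genVertex_comm {l : ℕ} {u w : V} (h : u ∈ G.genVertex l w) :
    w ∈ G.genVertex l u := by
  exact (show G.labelsToVtx l u = G.labelsToVtx l w from h).symm

lemma self_mem_genVertex (l : ℕ) (w : V) : w ∈ G.genVertex l w := rfl

end IdealProperAux
namespace IdealProperAux

open LabelledGraph

variable {V Ed A : Type*} {G : LabelledGraph V Ed A}
variable {𝔄 : Type*} [NonUnitalCStarAlgebra 𝔄]

/-- `s_{β_1} ⋯ s_{β_n} * x` -/
def smulL (ρ : G.Rep G.barE 𝔄) (β : List A) (x : 𝔄) : 𝔄 :=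
  β.foldr (fun b y => ρ.s b * y) x

/-- `x * s_{α_n}^* ⋯ s_{α_1}^*` -/
def smulR (ρ : G.Rep G.barE 𝔄) (α : List A) (x : 𝔄) : 𝔄 :=
  α.foldr (fun b y => y * star (ρ.s b)) x

variable {ρ : G.Rep G.barE 𝔄}

lemma smulL_nil (x : 𝔄) : smulL ρ [] x = x := rfl

lemma smulL_cons (b : A) (β : List A) (x : 𝔄) :
    smulL ρ (b :: β) x = ρ.s b * smulL ρ β x := rfl

lemma smulR_nil (x : 𝔄) : smulR ρ [] x = x := rfl

lemma smulR_cons (a : A) (α : List A) (x : 𝔄) :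
    smulR ρ (a :: α) x = smulR ρ α x * star (ρ.s a) := rfl

lemma smulL_zero (β : List A) : smulL ρ β (0 : 𝔄) = 0 := by
  induction β with
  | nil => rfl
  | cons b β ih => rw [smulL_cons, ih, mul_zero]

lemma smulR_zero (α : List A) : smulR ρ α (0 : 𝔄) = 0 := by
  induction α with
  | nil => rfl
  | cons a α ih => rw [smulR_cons, ih, zero_mul]

lemma mul_smulR (α : List A) (x z : 𝔄) :
    x * smulR ρ α z = smulR ρ α (x * z) := by
  induction α with
  | nil => rfl
  | cons a α ih => rw [smulR_cons, smulR_cons, ← mul_assoc, ih]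

lemma smulR_append_single (α : List A) (c : A) (z : 𝔄) :
    smulR ρ (α ++ [c]) z = smulR ρ α (z * star (ρ.s c)) := by
  simp [smulR, List.foldr_append]

lemma p_selfadj {S : Set V} (hS : S ∈ G.barE) : star (ρ.p S) = ρ.p S :=
  (ρ.p_proj S hS).1

lemma sstar_p (hacc : G.Accommodating G.barE) {S : Set V} (hS : S ∈ G.barE) (b : A) :
    star (ρ.s b) * ρ.p S = ρ.p (G.relRange S [b]) * star (ρ.s b) := by
  have h := congrArg star (ρ.p_s S hS b)
  rwa [star_mul, star_mul, p_selfadj hS,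
    p_selfadj (relRange_mem_barE hacc hS [b])] at h

lemma pS_smulL (hacc : G.Accommodating G.barE) (β : List A) {S : Set V}
    (hS : S ∈ G.barE) (x : 𝔄) :
    ρ.p S * smulL ρ β x = smulL ρ β (ρ.p (relR G S β) * x) := by
  induction β generalizing S with
  | nil => rfl
  | cons b β ih =>
    rw [smulL_cons, ← mul_assoc, ρ.p_s S hS b, mul_assoc,
      ih (relRange_mem_barE hacc hS [b]), relR_relRange_single, smulL_cons]
    rfl

end IdealProperAux
namespace IdealProperAux

open LabelledGraph

variable {V Ed A : Type*} {G : LabelledGraph V Ed A}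
variable {𝔄 : Type*} [NonUnitalCStarAlgebra 𝔄]
variable (ρ : G.Rep G.barE 𝔄)

/-- Monomials `s_β p_B s_α^*` with `B` inside the `k`-step reachable set of `K`
and `|β| ≤ k`. -/
def genSet (K : Set V) (k : ℕ) : Set 𝔄 :=
  { y | ∃ (β α : List A) (B : Set V), B ∈ G.barE ∧ B ⊆ reach G K k ∧
      β.length ≤ k ∧ y = smulL ρ β (smulR ρ α (ρ.p B)) }

lemma genSet_mono (K : Set V) {k k' : ℕ} (h : k ≤ k') :
    genSet ρ K k ⊆ genSet ρ K k' := by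
  rintro y ⟨β, α, B, hB, hBr, hβ, rfl⟩
  exact ⟨β, α, B, hB, hBr.trans (reach_mono h), hβ.trans h, rfl⟩

/-- Elements killed from the left by any `p_C` with `C` away from the
`k`-step neighbourhood of `K`. -/
def killAt (K : Set V) (k : ℕ) : Set 𝔄 :=
  { z | ∀ C ∈ G.barE, C ∩ back G (reach G K k) k = ∅ → ρ.p C * z = 0 }

lemma killAt_mono (K : Set V) {k k' : ℕ} (h : k ≤ k') :
    killAt ρ K k ⊆ killAt ρ K k' := by
  intro z hz C hC hdisj
  refine hz C hC ?_
  have : back G (reach G K k) k ⊆ back G (reach G K k') k' :=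
    (back_mono_set (reach_mono h) k).trans (back_mono h)
  exact Set.eq_empty_of_subset_empty ((Set.inter_subset_inter_right C this).trans hdisj.le)

lemma killAt_zero_mem (K : Set V) (k : ℕ) : (0 : 𝔄) ∈ killAt ρ K k :=
  fun C _ _ => mul_zero _

lemma killAt_add_mem {K : Set V} {k : ℕ} {z w : 𝔄} (hz : z ∈ killAt ρ K k)
    (hw : w ∈ killAt ρ K k) : z + w ∈ killAt ρ K k := by
  intro C hC hd
  rw [mul_add, hz C hC hd, hw C hC hd, add_zero]

lemma killAt_smul_mem {K : Set V} {k : ℕ} (c : ℂ) {z : 𝔄} (hz : z ∈ killAt ρ K k) :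
    c • z ∈ killAt ρ K k := by
  intro C hC hd
  rw [mul_smul_comm, hz C hC hd, smul_zero]

lemma killAt_mul_right {K : Set V} {k : ℕ} {z : 𝔄} (hz : z ∈ killAt ρ K k) (y : 𝔄) :
    z * y ∈ killAt ρ K k := by
  intro C hC hd
  rw [← mul_assoc, hz C hC hd, zero_mul]

/-- `killAt` as a submodule. -/
def killAtSub (K : Set V) (k : ℕ) : Submodule ℂ 𝔄 where
  carrier := killAt ρ K k
  add_mem' := killAt_add_mem ρ
  zero_mem' := killAt_zero_mem ρ K k
  smul_mem' := killAt_smul_mem ρ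

lemma genSet_subset_killAt (hacc : G.Accommodating G.barE) (K : Set V) (k : ℕ) :
    genSet ρ K k ⊆ killAt ρ K k := by
  rintro y ⟨β, α, B, hB, hBr, hβ, rfl⟩ C hC hd
  rw [pS_smulL hacc β hC, mul_smulR, ← ρ.p_inter _ (relR_mem_barE hacc hC β) _ hB]
  have hempty : relR G C β ∩ B = ∅ := by
    rw [Set.eq_empty_iff_forall_notMem]
    rintro u ⟨hu1, hu2⟩
    cases β with
    | nil =>
      have : u ∈ C ∩ back G (reach G K k) k :=
        ⟨hu1, subset_back k (hBr hu2)⟩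
      rw [hd] at this
      exact this
    | cons b β' =>
      obtain ⟨w, hwC, hwb⟩ := exists_back_of_relRange hu1 (hBr hu2)
      have hwb' : w ∈ back G (reach G K k) k := back_mono hβ hwb
      have : w ∈ C ∩ back G (reach G K k) k := ⟨hwC, hwb'⟩
      rw [hd] at this
      exact this
  rw [hempty, ρ.p_empty, smulR_zero, smulL_zero]

end IdealProperAux
namespace IdealProperAux

open LabelledGraph

variable {V Ed A : Type*} {G : LabelledGraph V Ed A}
variable {𝔄 : Type*} [NonUnitalCStarAlgebra 𝔄]
variable (ρ : G.Rep G.barE 𝔄)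

/-- Left multiplication by `x` shifts `span (genSet K k)` by at most `n`. -/
def LeftStable (K : Set V) (x : 𝔄) (n : ℕ) : Prop :=
  ∀ k : ℕ, ∀ y ∈ Submodule.span ℂ (genSet ρ K k),
    x * y ∈ Submodule.span ℂ (genSet ρ K (k + n))

lemma leftStable_of_forall {K : Set V} {x : 𝔄} {n : ℕ}
    (h : ∀ k, ∀ y ∈ genSet ρ K k, x * y ∈ Submodule.span ℂ (genSet ρ K (k + n))) :
    LeftStable ρ K x n := by
  intro k y hy
  have hle : Submodule.span ℂ (genSet ρ K k) ≤
      (Submodule.span ℂ (genSet ρ K (k + n))).comap (LinearMap.mulLeft ℂ x) :=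
    Submodule.span_le.mpr (fun y hy => h k y hy)
  exact hle hy

lemma leftStable_s (K : Set V) (c : A) : LeftStable ρ K (ρ.s c) 1 := by
  refine leftStable_of_forall ρ ?_
  rintro k y ⟨β, α, B, hB, hBr, hβ, rfl⟩
  refine Submodule.subset_span ⟨c :: β, α, B, hB, hBr.trans (reach_mono (by omega)), ?_, rfl⟩
  simpa using Nat.add_le_add_right hβ 1

lemma leftStable_p (hacc : G.Accommodating G.barE) (K : Set V) {S : Set V}
    (hS : S ∈ G.barE) : LeftStable ρ K (ρ.p S) 1 := by
  refine leftStable_of_forall ρ ?_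
  rintro k y ⟨β, α, B, hB, hBr, hβ, rfl⟩
  rw [pS_smulL hacc β hS, mul_smulR, ← ρ.p_inter _ (relR_mem_barE hacc hS β) _ hB]
  refine Submodule.subset_span ⟨β, α, relR G S β ∩ B,
    hacc.inter_mem _ (relR_mem_barE hacc hS β) _ hB,
    (Set.inter_subset_right.trans hBr).trans (reach_mono (by omega)), by omega, rfl⟩

lemma leftStable_sstar (hacc : G.Accommodating G.barE) (K : Set V) (c : A) :
    LeftStable ρ K (star (ρ.s c)) 1 := by
  refine leftStable_of_forall ρ ?_
  rintro k y ⟨β, α, B, hB, hBr, hβ, rfl⟩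
  cases β with
  | nil =>
    rw [smulL_nil, mul_smulR, sstar_p hacc hB c, ← mul_smulR, mul_smulR,
      ← smulR_append_single]
    refine Submodule.subset_span ⟨[], α ++ [c], G.relRange B [c],
      relRange_mem_barE hacc hB [c], ?_, by simp, rfl⟩
    have := relRange_subset_reach (G := G) (β := [c]) hBr
    simpa using this
  | cons b β' =>
    by_cases hbc : c = b
    · subst hbc
      rw [smulL_cons, ← mul_assoc, ρ.s_star_s c, pS_smulL hacc β' (rngSet_mem_barE hacc c),
        mul_smulR, ← ρ.p_inter _ (relR_mem_barE hacc (rngSet_mem_barE hacc c) β') _ hB]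
      refine Submodule.subset_span ⟨β', α, _,
        hacc.inter_mem _ (relR_mem_barE hacc (rngSet_mem_barE hacc c) β') _ hB,
        (Set.inter_subset_right.trans hBr).trans (reach_mono (by omega)), ?_, rfl⟩
      simp at hβ; omega
    · rw [smulL_cons, ← mul_assoc, ρ.s_orth c b hbc, zero_mul]
      exact Submodule.zero_mem _

lemma leftStable_zero (K : Set V) : LeftStable ρ K (0 : 𝔄) 0 := by
  intro k y hy
  rw [zero_mul]
  exact Submodule.zero_mem _

lemma leftStable_add {K : Set V} {x x' : 𝔄} {n n' : ℕ}
    (h : LeftStable ρ K x n) (h' : LeftStable ρ K x' n') :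
    LeftStable ρ K (x + x') (max n n') := by
  intro k y hy
  rw [add_mul]
  refine Submodule.add_mem _ ?_ ?_
  · exact Submodule.span_mono (genSet_mono ρ K (by omega)) (h k y hy)
  · exact Submodule.span_mono (genSet_mono ρ K (by omega)) (h' k y hy)

lemma leftStable_smul {K : Set V} {x : 𝔄} {n : ℕ} (c : ℂ)
    (h : LeftStable ρ K x n) : LeftStable ρ K (c • x) n := by
  intro k y hy
  rw [smul_mul_assoc]
  exact Submodule.smul_mem _ c (h k y hy)

lemma leftStable_mul {K : Set V} {x x' : 𝔄} {n n' : ℕ}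
    (h : LeftStable ρ K x n) (h' : LeftStable ρ K x' n') :
    LeftStable ρ K (x * x') (n' + n) := by
  intro k y hy
  rw [mul_assoc]
  have := h (k + n') (x' * y) (h' k y hy)
  rwa [add_assoc] at this

/-- Every element of the generated star-subalgebra left-shifts the span filtration. -/
lemma adjoin_leftStable (hacc : G.Accommodating G.barE) (K : Set V) :
    ∀ x ∈ NonUnitalStarAlgebra.adjoin ℂ (Set.range ρ.s ∪ ρ.p '' G.barE),
      ∃ n, LeftStable ρ K x n := by
  intro x hx
  have main : ∀ x ∈ NonUnitalStarAlgebra.adjoin ℂ (Set.range ρ.s ∪ ρ.p '' G.barE),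
      (∃ n, LeftStable ρ K x n) ∧ (∃ n, LeftStable ρ K (star x) n) := by
    intro x hx
    induction hx using NonUnitalStarAlgebra.adjoin_induction with
    | mem x hx =>
      rcases hx with ⟨c, rfl⟩ | ⟨S, hS, rfl⟩
      · exact ⟨⟨1, leftStable_s ρ K c⟩, ⟨1, leftStable_sstar ρ hacc K c⟩⟩
      · refine ⟨⟨1, leftStable_p ρ hacc K hS⟩, ⟨1, ?_⟩⟩
        rw [p_selfadj hS]
        exact leftStable_p ρ hacc K hS
    | add x y _ _ hx hy =>
      obtain ⟨⟨n1, h1⟩, ⟨n2, h2⟩⟩ := hx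
      obtain ⟨⟨m1, g1⟩, ⟨m2, g2⟩⟩ := hy
      refine ⟨⟨max n1 m1, leftStable_add ρ h1 g1⟩, ⟨max n2 m2, ?_⟩⟩
      rw [star_add]
      exact leftStable_add ρ h2 g2
    | zero => exact ⟨⟨0, leftStable_zero ρ K⟩, ⟨0, by rw [star_zero]; exact leftStable_zero ρ K⟩⟩
    | mul x y _ _ hx hy =>
      obtain ⟨⟨n1, h1⟩, ⟨n2, h2⟩⟩ := hx
      obtain ⟨⟨m1, g1⟩, ⟨m2, g2⟩⟩ := hy
      refine ⟨⟨m1 + n1, leftStable_mul ρ h1 g1⟩, ⟨n2 + m2, ?_⟩⟩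
      rw [star_mul]
      exact leftStable_mul ρ g2 h2
    | smul c x _ hx =>
      obtain ⟨⟨n1, h1⟩, ⟨n2, h2⟩⟩ := hx
      refine ⟨⟨n1, leftStable_smul ρ c h1⟩, ⟨n2, ?_⟩⟩
      rw [star_smul]
      exact leftStable_smul ρ _ h2
    | star x _ hx =>
      obtain ⟨h1, h2⟩ := hx
      refine ⟨h2, by rwa [star_star]⟩
  exact (main x hx).1

end IdealProperAux

open IdealProperAux

/-- For a locally finite graph with `|r(a)| = ∞` for some label `a`
and all generalized vertices eventually finite, the closed two-sided ideal
generated by the projection `p_{[v]_l}` of a finite generalized vertex is proper. -/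
theorem ideal_of_finite_genVertex_proper
    {V Ed A : Type*} [Countable A] (G : LabelledGraph V Ed A)
    (hloc : ∀ v : V, {e : Ed | G.src e = v}.Finite ∧ {e : Ed | G.rng e = v}.Finite)
    (hacc : G.Accommodating G.barE)
    (hwlr : G.WeaklyLeftResolving G.barE)
    (hsa : G.StandingAssumptions G.barE)
    (hinf : ∃ a : A, (G.rngSet [a]).Infinite)
    (hfin : ∀ v : V, ∃ l : ℕ, 1 ≤ l ∧ (G.genVertex l v).Finite)
    (𝔄 : Type*) [NonUnitalCStarAlgebra 𝔄]
    (ρ : G.Rep G.barE 𝔄) (hgen : ρ.Generates)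
    (hnz : ∀ S ∈ G.barE, S.Nonempty → ρ.p S ≠ 0)
    (v : V) (l : ℕ) (hl : 1 ≤ l) (hvl : (G.genVertex l v).Finite) :
    ∃ I : TwoSidedIdeal 𝔄, IsClosed (I : Set 𝔄) ∧ ρ.p (G.genVertex l v) ∈ I ∧
      (I : Set 𝔄) ≠ Set.univ := by
  classical
  obtain ⟨a₀, ha₀⟩ := hinf
  set K : Set V := G.genVertex l v with hKdef
  have hKmem : K ∈ G.barE := genVertex_mem_barE hl v
  set b : 𝔄 := ρ.p (G.rngSet [a₀]) with hbdef
  -- Step 1: for every k there is a far-away nonempty C ⊆ r(a₀) in barE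
  have existsC : ∀ k : ℕ, ∃ C ∈ G.barE, C.Nonempty ∧ C ⊆ G.rngSet [a₀] ∧
      C ∩ back G (reach G K k) k = ∅ := by
    intro k
    set W : Set V := back G (reach G K k) k with hWdef
    have hWf : W.Finite :=
      back_finite (fun u => (hloc u).2) (reach_finite (fun u => (hloc u).1) hvl k) k
    have hBadf : (⋃ u ∈ W, G.genVertex (hfin u).choose u).Finite :=
      hWf.biUnion (fun u _ => (hfin u).choose_spec.2)
    have hbig : ((G.rngSet [a₀]) \ (W ∪ ⋃ u ∈ W, G.genVertex (hfin u).choose u)).Infinite :=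
      ha₀.diff (hWf.union hBadf)
    obtain ⟨w, hwr, hwn⟩ := hbig.nonempty
    set L : ℕ := max 1 (hWf.toFinset.sup (fun u => (hfin u).choose)) with hLdef
    refine ⟨G.genVertex L w ∩ G.rngSet [a₀],
      hacc.inter_mem _ (genVertex_mem_barE (le_max_left _ _) w) _ (rngSet_mem_barE hacc a₀),
      ⟨w, self_mem_genVertex L w, hwr⟩, Set.inter_subset_right, ?_⟩
    rw [Set.eq_empty_iff_forall_notMem]
    rintro u ⟨⟨huw, -⟩, huW⟩
    have hlu : (hfin u).choose ≤ L :=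
      le_max_of_le_right (Finset.le_sup (f := fun u => (hfin u).choose) (hWf.mem_toFinset.mpr huW))
    have hw' : w ∈ G.genVertex (hfin u).choose u :=
      mem_genVertex_comm (genVertex_antitone hlu w huw)
    exact hwn (Or.inr (Set.mem_biUnion huW hw'))
  -- Step 2: every element of `killAt` is at distance ≥ 1 from b
  have hdist : ∀ k : ℕ, ∀ z ∈ killAt ρ K k, (1 : ℝ) ≤ ‖b - z‖ := by
    intro k z hz
    obtain ⟨C, hC, hCne, hCsub, hCd⟩ := existsC k
    have hq0 : ρ.p C * z = 0 := hz C hC hCd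
    have hqb : ρ.p C * b = ρ.p C := by
      rw [hbdef, ← ρ.p_inter C hC _ (rngSet_mem_barE hacc a₀), Set.inter_eq_left.mpr hCsub]
    have hqq : ρ.p C * ρ.p C = ρ.p C := (ρ.p_proj C hC).2
    have hqnz : ρ.p C ≠ 0 := hnz C hC hCne
    have hqn : ‖ρ.p C‖ = 1 := by
      have h1 : ‖ρ.p C‖ * ‖ρ.p C‖ = ‖ρ.p C‖ := by
        rw [← CStarRing.norm_star_mul_self, p_selfadj hC, hqq]
      have h2 : ‖ρ.p C‖ ≠ 0 := norm_ne_zero_iff.mpr hqnz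
      exact mul_left_cancel₀ h2 (h1.trans (mul_one _).symm)
    calc (1 : ℝ) = ‖ρ.p C * (b - z)‖ := by rw [mul_sub, hq0, sub_zero, hqb, hqn]
      _ ≤ ‖ρ.p C‖ * ‖b - z‖ := norm_mul_le _ _
      _ = ‖b - z‖ := by rw [hqn, one_mul]
  set Kill : Set 𝔄 := ⋃ k, killAt ρ K k with hKilldef
  -- Step 3: b is not in the closure of Kill
  have hbK : b ∉ closure Kill := by
    intro hb
    have hsub : Kill ⊆ {z : 𝔄 | 1 ≤ ‖b - z‖} := by
      intro z hz
      obtain ⟨k, hzk⟩ := Set.mem_iUnion.mp hz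
      exact hdist k z hzk
    have hclosed : IsClosed {z : 𝔄 | 1 ≤ ‖b - z‖} :=
      isClosed_le continuous_const ((continuous_const.sub continuous_id).norm)
    have hmem : (1 : ℝ) ≤ ‖b - b‖ := closure_minimal hsub hclosed hb
    rw [sub_self, norm_zero] at hmem
    linarith
  -- Step 4: Kill is a submodule
  have Kill_mem : ∀ {z : 𝔄}, z ∈ Kill ↔ ∃ k, z ∈ killAt ρ K k := fun {z} => Set.mem_iUnion
  have Kill_add : ∀ {x y : 𝔄}, x ∈ Kill → y ∈ Kill → x + y ∈ Kill := by
    intro x y hx hy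
    obtain ⟨k1, hx⟩ := Kill_mem.mp hx
    obtain ⟨k2, hy⟩ := Kill_mem.mp hy
    exact Kill_mem.mpr ⟨max k1 k2,
      killAt_add_mem ρ (killAt_mono ρ K (le_max_left _ _) hx)
        (killAt_mono ρ K (le_max_right _ _) hy)⟩
  let KillS : Submodule ℂ 𝔄 :=
    { carrier := Kill
      add_mem' := Kill_add
      zero_mem' := Kill_mem.mpr ⟨0, killAt_zero_mem ρ K 0⟩
      smul_mem' := by
        intro c x hx
        obtain ⟨k, hx⟩ := Kill_mem.mp hx
        exact Kill_mem.mpr ⟨k, killAt_smul_mem ρ c hx⟩ }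
  -- Step 5: elements of the dense subalgebra, multiplied into p K, land in Kill
  have hKillsub : ∀ k, Submodule.span ℂ (genSet ρ K k) ≤ killAtSub ρ K k :=
    fun k => Submodule.span_le.mpr (genSet_subset_killAt ρ hacc K k)
  have hpKgen : ρ.p K ∈ genSet ρ K 0 := ⟨[], [], K, hKmem, subset_rfl, le_refl 0, rfl⟩
  set Adj : Set 𝔄 :=
    (NonUnitalStarAlgebra.adjoin ℂ (Set.range ρ.s ∪ ρ.p '' G.barE) : Set 𝔄) with hAdjdef
  have hAdj : ∀ x : 𝔄, x ∈ closure Adj := by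
    intro x
    have h : closure Adj = Set.univ := hgen
    rw [h]
    trivial
  have hxadj_kill : ∀ x ∈ Adj, x * ρ.p K ∈ Kill := by
    intro x hx
    obtain ⟨n, hn⟩ := adjoin_leftStable ρ hacc K x hx
    exact Kill_mem.mpr ⟨0 + n, hKillsub (0 + n) (hn 0 (ρ.p K) (Submodule.subset_span hpKgen))⟩
  have hpK_kill : ρ.p K ∈ killAt ρ K 0 := by
    intro C hC hd
    rw [← ρ.p_inter C hC K hKmem]
    have hCK : C ∩ K = ∅ := hd
    rw [hCK, ρ.p_empty]
  -- Step 6: the ideal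
  set SS : Set 𝔄 := {z | z = ρ.p K ∨ (∃ x, z = x * ρ.p K) ∨ (∃ y, z = ρ.p K * y) ∨
    ∃ x y, z = x * ρ.p K * y} with hSSdef
  set N : Submodule ℂ 𝔄 := Submodule.span ℂ SS with hNdef
  have hSsub : SS ⊆ closure Kill := by
    rintro z (rfl | ⟨x, rfl⟩ | ⟨y, rfl⟩ | ⟨x, y, rfl⟩)
    · exact subset_closure (Kill_mem.mpr ⟨0, hpK_kill⟩)
    · have hmaps : Set.MapsTo (fun t : 𝔄 => t * ρ.p K) Adj (closure Kill) :=
        fun t ht => subset_closure (hxadj_kill t ht)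
      exact hmaps.closure_left (continuous_id.mul continuous_const) isClosed_closure (hAdj x)
    · exact subset_closure (Kill_mem.mpr ⟨0, killAt_mul_right ρ hpK_kill y⟩)
    · have hmaps : Set.MapsTo (fun t : 𝔄 => t * ρ.p K * y) Adj (closure Kill) := by
        intro t ht
        obtain ⟨k, hk⟩ := Kill_mem.mp (hxadj_kill t ht)
        exact subset_closure (Kill_mem.mpr ⟨k, killAt_mul_right ρ hk y⟩)
      exact hmaps.closure_left ((continuous_id.mul continuous_const).mul continuous_const)
        isClosed_closure (hAdj x)
  have hNsub : (N : Set 𝔄) ⊆ closure Kill := by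
    have : N ≤ KillS.topologicalClosure := by
      refine Submodule.span_le.mpr ?_
      intro z hz
      exact hSsub hz
    intro z hz
    exact this hz
  have hNclsub : closure (N : Set 𝔄) ⊆ closure Kill :=
    closure_minimal hNsub isClosed_closure
  -- stability of N under left/right multiplication
  have hNstabL : ∀ (t : 𝔄) {z : 𝔄}, z ∈ N → t * z ∈ N := by
    intro t z hz
    have hle : N ≤ N.comap (LinearMap.mulLeft ℂ t) := by
      refine Submodule.span_le.mpr ?_
      rintro z (rfl | ⟨x, rfl⟩ | ⟨y, rfl⟩ | ⟨x, y, rfl⟩) <;>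
        simp only [Set.mem_preimage, SetLike.mem_coe, Submodule.mem_comap,
          LinearMap.mulLeft_apply]
      · exact Submodule.subset_span (Or.inr (Or.inl ⟨t, rfl⟩))
      · exact Submodule.subset_span (Or.inr (Or.inl ⟨t * x, (mul_assoc t x _).symm⟩))
      · exact Submodule.subset_span (Or.inr (Or.inr (Or.inr ⟨t, y, (mul_assoc t _ y).symm⟩)))
      · exact Submodule.subset_span (Or.inr (Or.inr (Or.inr
          ⟨t * x, y, by rw [mul_assoc, mul_assoc, mul_assoc]⟩)))
    exact hle hz
  have hNstabR : ∀ (t : 𝔄) {z : 𝔄}, z ∈ N → z * t ∈ N := by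
    intro t z hz
    have hle : N ≤ N.comap (LinearMap.mulRight ℂ t) := by
      refine Submodule.span_le.mpr ?_
      rintro z (rfl | ⟨x, rfl⟩ | ⟨y, rfl⟩ | ⟨x, y, rfl⟩) <;>
        simp only [Set.mem_preimage, SetLike.mem_coe, Submodule.mem_comap,
          LinearMap.mulRight_apply]
      · exact Submodule.subset_span (Or.inr (Or.inr (Or.inl ⟨t, rfl⟩)))
      · exact Submodule.subset_span (Or.inr (Or.inr (Or.inr ⟨x, t, rfl⟩)))
      · exact Submodule.subset_span (Or.inr (Or.inr (Or.inl ⟨y * t, mul_assoc _ y t⟩)))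
      · exact Submodule.subset_span (Or.inr (Or.inr (Or.inr ⟨x, y * t, mul_assoc _ y t⟩)))
    exact hle hz
  have hNcl_coe : (N.topologicalClosure : Set 𝔄) = closure (N : Set 𝔄) :=
    Submodule.topologicalClosure_coe N
  refine ⟨TwoSidedIdeal.mk' (closure (N : Set 𝔄))
    (subset_closure N.zero_mem)
    (fun {x y} hx hy => by
      rw [← hNcl_coe] at hx hy ⊢
      exact N.topologicalClosure.add_mem hx hy)
    (fun {x} hx => by
      rw [← hNcl_coe] at hx ⊢
      exact N.topologicalClosure.neg_mem hx)
    (fun {x y} hy => by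
      have hmaps : Set.MapsTo (fun t : 𝔄 => x * t) (N : Set 𝔄) (closure (N : Set 𝔄)) :=
        fun t ht => subset_closure (hNstabL x ht)
      exact hmaps.closure_left (continuous_const.mul continuous_id) isClosed_closure hy)
    (fun {x y} hx => by
      have hmaps : Set.MapsTo (fun t : 𝔄 => t * y) (N : Set 𝔄) (closure (N : Set 𝔄)) :=
        fun t ht => subset_closure (hNstabR y ht)
      exact hmaps.closure_left (continuous_id.mul continuous_const) isClosed_closure hx),
    ?_, ?_, ?_⟩
  · rw [TwoSidedIdeal.coe_mk']
    exact isClosed_closure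
  · rw [TwoSidedIdeal.mem_mk']
    exact subset_closure (Submodule.subset_span (Or.inl rfl))
  · rw [TwoSidedIdeal.coe_mk']
    intro h
    exact hbK (hNclsub (h ▸ Set.mem_univ b))
end

section
/- A labelled space (E,𝓛,𝓑) is cofinal if and only if it is l-cofinal for all l ≥ 1. -/
open scoped BigOperators

lemma aux_label_length {V Ed A : Type*} {G : LabelledGraph V Ed A}
    (p : G.GPath) : p.label.length = p.len := by
  simp [LabelledGraph.GPath.label, LabelledGraph.GPath.len]

lemma aux_labelsToVtx_inter {V Ed A : Type*} (G : LabelledGraph V Ed A)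
    {l l' : ℕ} (h : l ≤ l') (w : V) :
    G.labelsToVtx l w = G.labelsToVtx l' w ∩ {α | α.length ≤ l} := by
  ext α
  constructor
  · rintro ⟨p, hlab, hlen, hr⟩
    exact ⟨⟨p, hlab, hlen.trans h, hr⟩, by
      simpa [Set.mem_setOf_eq, ← hlab] using (aux_label_length p ▸ hlen)⟩
  · rintro ⟨⟨p, hlab, _, hr⟩, hle⟩
    refine ⟨p, hlab, ?_, hr⟩
    rw [← aux_label_length p, hlab]; exact hle

lemma aux_genVertex_anti {V Ed A : Type*} (G : LabelledGraph V Ed A)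
    {l l' : ℕ} (h : l ≤ l') (v : V) :
    G.genVertex l' v ⊆ G.genVertex l v := by
  intro w hw
  simp only [LabelledGraph.genVertex, Set.mem_setOf_eq] at hw ⊢
  rw [aux_labelsToVtx_inter G h w, aux_labelsToVtx_inter G h v, hw]

lemma aux_relRange_mono {V Ed A : Type*} (G : LabelledGraph V Ed A)
    {S T : Set V} (h : S ⊆ T) (α : List A) :
    G.relRange S α ⊆ G.relRange T α := by
  rintro v ⟨p, hl, hs, hr⟩
  exact ⟨p, hl, h hs, hr⟩

/-- A labelled space is cofinal iff it is `l`-cofinal for all `l ≥ 1`. -/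
theorem cofinal_iff_lCofinal_forall
    {V Ed A : Type*} (G : LabelledGraph V Ed A)
    (B : Set (Set V)) (hacc : G.Accommodating B) :
    G.Cofinal ↔ ∀ l : ℕ, 1 ≤ l → G.LCofinal l := by
  constructor
  · rintro ⟨L, hL, hcof⟩ l hl x hx v w hw
    obtain ⟨d, hd, N, hN, m, lds, hlds, hsub⟩ :=
      hcof (max L l) (le_max_left _ _) x hx v w hw
    refine ⟨d, (le_max_right L l).trans hd, N, hN, m, lds, hlds, hsub.trans ?_⟩
    exact Set.iUnion_mono fun i =>
      aux_relRange_mono G (aux_genVertex_anti G (le_max_right L l) v) (lds i)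
  · intro h
    exact ⟨1, one_pos, fun l hl => h l hl⟩
end

section
/- Let (E,𝓛,𝓑) be a labelled space and v ∈ E^0. If [v]_k is not disagreeable for some k ≥ 1, then [v]_l is not disagreeable for all l > k. -/
open scoped BigOperators

/-- If `[v]_k` is not disagreeable, then `[v]_l` is not disagreeable
for all `l > k`. -/
theorem not_disagreeableVtx_mono
    {V Ed A : Type*} (G : LabelledGraph V Ed A)
    (B : Set (Set V)) (hacc : G.Accommodating B)
    (v : V) (k : ℕ) (hk : 1 ≤ k)
    (h : ¬ G.DisagreeableVtx k v) :
    ∀ l : ℕ, k < l → ¬ G.DisagreeableVtx l v := by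
  intro l hkl hd
  apply h
  obtain ⟨N, hN, hall⟩ := hd
  refine ⟨N, hN, fun n hn => ?_⟩
  obtain ⟨α, hlen, hlab, ⟨w, hw1, hw2⟩, hnag⟩ := hall n hn
  have hlen_eq : ∀ (p : G.GPath), p.len = p.label.length := by
    intro p; simp [LabelledGraph.GPath.len, LabelledGraph.GPath.label]
  have hsub : ∀ u u' : V, G.labelsToVtx l u = G.labelsToVtx l u' →
      G.labelsToVtx k u ⊆ G.labelsToVtx k u' := by
    intro u u' hl β ⟨p, hp1, hp2, hp3⟩
    have : β ∈ G.labelsToVtx l u' := by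
      rw [← hl]; exact ⟨p, hp1, hp2.trans hkl.le, hp3⟩
    obtain ⟨q, hq1, hq2, hq3⟩ := this
    refine ⟨q, hq1, ?_, hq3⟩
    rw [hlen_eq q, hq1, ← hp1, ← hlen_eq p]; exact hp2
  have hmem : w ∈ G.genVertex k v := by
    have := hw2
    simp only [LabelledGraph.genVertex, Set.mem_setOf_eq] at this ⊢
    exact Set.Subset.antisymm (hsub w v this) (hsub v w this.symm)
  refine ⟨α, hlen, hlab, ⟨w, hw1, hmem⟩, fun hag => hnag ?_⟩
  obtain ⟨β, α', γ, h1, h2, h3, h4, h5, h6, h7⟩ := hag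
  exact ⟨β, α', γ, h1, h2, h3, h4, h5.trans hkl.le, h6, h7⟩
end

section
/- Let (E,𝓛,𝓑) be a labelled space with E having no sinks, and let v ∈ E^0, l ≥ 1. If [v]_l is not disagreeable, then there exists N > 1 such that every α ∈ 𝓛([v]_l E^{≥N}) is of the form α = β^j β' for some labelled path β ∈ 𝓛(E^{≤l}), some j ≥ 1, and some initial segment β' of β. -/
open scoped BigOperators

/-- Periodic decomposition: if `α = β ++ α'` with `α'` a prefix of `α`, then
`α = β^j ++ β'` for some nonempty prefix `β'` of `β`. -/
lemma periodic_decomp {A : Type*} :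
    ∀ (n : ℕ) (α β α' : List A), α.length = n → β ≠ [] → α = β ++ α' → α' <+: α →
      ∃ (j : ℕ) (β' : List A), β' ≠ [] ∧ β' <+: β ∧ α = wpow β j ++ β' ∧
        α.length = j * β.length + β'.length := by
  intro n
  induction n using Nat.strong_induction_on with
  | _ n ih =>
    intro α β α' hn hβ h1 h2
    by_cases hle : α'.length ≤ β.length
    · rcases eq_or_ne α' [] with rfl | hne
      · refine ⟨0, β, hβ, List.prefix_refl β, ?_, ?_⟩
        · simpa [wpow] using h1
        · simp [h1, wpow]
      · refine ⟨1, α', hne, ?_, ?_, ?_⟩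
        · have hβp : β <+: α := ⟨α', h1.symm⟩
          exact List.prefix_of_prefix_length_le h2 hβp hle
        · simpa [wpow] using h1
        · simp [h1, wpow]
    · push_neg at hle
      obtain ⟨t, ht⟩ := h2
      have hβp : β <+: α' := by
        have hβα : β <+: α := ⟨α', h1.symm⟩
        exact List.prefix_of_prefix_length_le hβα ⟨t, ht⟩ hle.le
      obtain ⟨α'', hα''⟩ := hβp
      have h2' : α'' <+: α' := by
        refine ⟨t, ?_⟩
        have hcc : β ++ (α'' ++ t) = β ++ α' := by
          rw [← List.append_assoc, hα'', ht, h1]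
        exact List.append_cancel_left hcc
      have hlt : α'.length < n := by
        subst hn
        rw [h1]
        have := List.length_pos_iff.mpr hβ
        simp only [List.length_append]
        omega
      obtain ⟨j, β', hb1, hb2, hb3, hb4⟩ := ih _ hlt α' β α'' rfl hβ hα''.symm h2'
      refine ⟨j + 1, β', hb1, hb2, ?_, ?_⟩
      · rw [h1, hb3]
        simp [wpow, List.append_assoc]
      · rw [h1]
        simp only [List.length_append, hb4]
        ring

/-- If `[v]_l` is not disagreeable (and `E` has no sinks), then there
is `N > 1` such that every `α ∈ 𝓛([v]_l E^{≥N})` has the form `β^j β'` with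
`β ∈ 𝓛(E^{≤l})`, `j ≥ 1` and `β'` an initial segment of `β`. -/
theorem not_disagreeable_implies_eventually_periodic
    {V Ed A : Type*} (G : LabelledGraph V Ed A)
    (B : Set (Set V)) (hacc : G.Accommodating B)
    (hns : ∀ v : V, ∃ e : Ed, G.src e = v)
    (v : V) (l : ℕ) (hl : 1 ≤ l)
    (h : ¬ G.DisagreeableVtx l v) :
    ∃ N : ℕ, 1 < N ∧ ∀ α : List A,
      (∃ p : G.GPath, p.label = α ∧ p.src ∈ G.genVertex l v ∧ N ≤ p.len) →
      ∃ (β β' : List A) (j : ℕ), G.IsLabelled β ∧ β.length ≤ l ∧ 1 ≤ j ∧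
        β' ≠ [] ∧ β' <+: β ∧ α = wpow β j ++ β' := by
  rw [LabelledGraph.DisagreeableVtx] at h
  push_neg at h
  obtain ⟨n, hn, hfa⟩ := h (2 * l) (by positivity)
  refine ⟨n, by omega, ?_⟩
  rintro α ⟨p, hlab, hsrc, hlen⟩
  have hαlen : n ≤ α.length := by
    rw [← hlab]
    simpa [LabelledGraph.GPath.label, LabelledGraph.GPath.len] using hlen
  have hlabelled : G.IsLabelled α := ⟨p, hlab⟩
  have hsrcne : (G.srcSet α ∩ G.genVertex l v).Nonempty :=
    ⟨p.src, ⟨p, hlab, rfl⟩, hsrc⟩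
  have hag : G.Agreeable l α := by
    by_contra hna
    exact hfa α hαlen ⟨hlabelled, hsrcne, hna⟩
  obtain ⟨β, α', γ, hβl, hα'l, hγl, hlen_eq, hβle, he1, he2⟩ := hag
  have hβne : β ≠ [] := by
    obtain ⟨q, hq⟩ := hβl
    rw [← hq]
    simpa [LabelledGraph.GPath.label] using q.ne
  have hpre : α' <+: α := ⟨γ, he2.symm⟩
  obtain ⟨j, β', hb1, hb2, hb3, hb4⟩ :=
    periodic_decomp α.length α β α' rfl hβne he1 hpre
  have h5 : β'.length ≤ β.length := hb2.length_le
  have hj : 1 ≤ j := by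
    rcases Nat.eq_zero_or_pos j with hj0 | hj0
    · subst hj0
      simp only [Nat.zero_mul, Nat.zero_add] at hb4
      omega
    · exact hj0
  exact ⟨β, β', j, hβl, hβle, hj, hb1, hb2, hb3⟩
end

section
/- Let (E,𝓛,𝓑) be a labelled space with E having no sinks, and let v ∈ E^0, l ≥ 1. If [v]_l is not disagreeable, then every infinite labelled path x ∈ 𝓛(E^∞) with s(x) ∩ [v]_l ≠ ∅ is of the form x = β^∞ for some simple labelled path β ∈ 𝓛(E^{≤l}). -/
open scoped BigOperators

section AuxPeriodic

private lemma aux_wpow_length {A : Type*} (δ : List A) : ∀ n, (wpow δ n).length = n * δ.length := by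
  intro n; induction n with
  | zero => simp [wpow]
  | succ n ih => simp only [wpow, List.length_append, ih]; ring

private lemma aux_getElem_congr {A : Type*} (l : List A) {a b : ℕ} (hab : a = b)
    (ha : a < l.length) (hb : b < l.length) : l[a] = l[b] := by subst hab; rfl

private lemma aux_wpow_getElem {A : Type*} (δ : List A) (hδ : 0 < δ.length) :
    ∀ n j (h : j < (wpow δ n).length),
      (wpow δ n)[j] = δ[j % δ.length]'(Nat.mod_lt _ hδ) := by
  intro n
  induction n with
  | zero => intro j h; simp [wpow] at h
  | succ n ih =>
    intro j h
    change j < (δ ++ wpow δ n).length at h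
    show (δ ++ wpow δ n)[j] = _
    by_cases hj : j < δ.length
    · rw [List.getElem_append_left hj]
      exact aux_getElem_congr δ (Nat.mod_eq_of_lt hj).symm hj _
    · push_neg at hj
      have h' : j - δ.length < (wpow δ n).length := by
        have h2 := h; simp only [wpow, List.length_append] at h2; omega
      rw [List.getElem_append_right hj, ih _ h']
      exact aux_getElem_congr δ (by rw [← Nat.mod_eq_sub_mod hj]) _ _

private lemma aux_mod_period {A : Type*} (x : ℕ → A) (q : ℕ) (hq : 0 < q)
    (hp : ∀ i, x (i + q) = x i) : ∀ n, x n = x (n % q) := by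
  intro n
  induction n using Nat.strong_induction_on with
  | _ n ih =>
    rcases lt_or_ge n q with hlt | hge
    · rw [Nat.mod_eq_of_lt hlt]
    · calc x n = x (n - q + q) := by rw [Nat.sub_add_cancel hge]
        _ = x (n - q) := hp _
        _ = x ((n - q) % q) := ih _ (by omega)
        _ = x (n % q) := by rw [← Nat.mod_eq_sub_mod hge]

private lemma aux_finTake_getElem {A : Type*} (x : ℕ → A) (N j : ℕ)
    (h : j < (finTake x N).length) : (finTake x N)[j] = x j := by
  simp [finTake, List.getElem_ofFn]

private lemma aux_finTake_length {A : Type*} (x : ℕ → A) (N : ℕ) :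
    (finTake x N).length = N := by simp [finTake]

private lemma aux_prefix_path {V Ed A : Type*} (G : LabelledGraph V Ed A)
    (q : G.GInfPath) (m : ℕ) (hm : 1 ≤ m) :
    ∃ p : G.GPath, p.label = finTake q.label m ∧ p.src = q.src ∧ p.len = m := by
  have hne : (List.ofFn (fun i : Fin m => q.edges i)) ≠ [] := by
    intro hnil
    have := congrArg List.length hnil
    simp at this; omega
  refine ⟨⟨List.ofFn (fun i : Fin m => q.edges i), hne, ?_⟩, ?_, ?_, ?_⟩
  · show List.IsChain _ _
    rw [List.isChain_iff_getElem]
    intro i hi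
    simp only [List.get_eq_getElem, List.getElem_ofFn]
    exact q.chain i
  · simp only [LabelledGraph.GPath.label, finTake, List.map_ofFn, LabelledGraph.GInfPath.label]
    rfl
  · show G.src (_root_.List.head _ _) = _
    rw [List.head_eq_getElem, List.getElem_ofFn]
    rfl
  · simp [LabelledGraph.GPath.len]

end AuxPeriodic

/-- If `[v]_l` is not disagreeable (and `E` has no sinks), then every
infinite labelled path whose source meets `[v]_l` is `β^∞` for a simple labelled
path `β` of length at most `l`. -/
theorem not_disagreeable_implies_infinite_periodic
    {V Ed A : Type*} (G : LabelledGraph V Ed A)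
    (B : Set (Set V)) (hacc : G.Accommodating B)
    (hns : ∀ v : V, ∃ e : Ed, G.src e = v)
    (v : V) (l : ℕ) (hl : 1 ≤ l)
    (h : ¬ G.DisagreeableVtx l v) :
    ∀ x : ℕ → A, G.IsInfLabelled x → (G.infSrc x ∩ G.genVertex l v).Nonempty →
      ∃ β : List A, G.IsLabelled β ∧ β.length ≤ l ∧ SimpleWord β ∧ isPowInf β x := by
    classical
  intro x hx hmeet
  obtain ⟨w, hw1, hwv⟩ := hmeet
  obtain ⟨qp, hql, hqs⟩ := hw1
  simp only [LabelledGraph.DisagreeableVtx] at h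
  push_neg at h
  obtain ⟨n, hn1, hn⟩ := h 1 one_pos
  -- every sufficiently long prefix of x is agreeable
  have hagree : ∀ m, n ≤ m → 1 ≤ m → G.Agreeable l (finTake x m) := by
    intro m hm hm1
    obtain ⟨p, hpl, hps, hplen⟩ := aux_prefix_path G qp m hm1
    have hpl' : p.label = finTake x m := by rw [hpl, hql]
    by_contra hag
    exact hn (finTake x m) (by rw [aux_finTake_length]; exact hm)
      ⟨⟨p, hpl'⟩, ⟨w, ⟨p, hpl', hps.trans hqs⟩, hwv⟩, hag⟩
  -- each sufficiently long prefix has a period p with 1 ≤ p ≤ l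
  have hshift : ∀ m, n ≤ m → 1 ≤ m →
      ∃ p, 1 ≤ p ∧ p ≤ l ∧ ∀ i, i + p < m → x (i + p) = x i := by
    intro m hm hm1
    obtain ⟨β, α', γ, hβ, hα', hγ, hlen, hle, he1, he2⟩ := hagree m hm hm1
    have hβne : β ≠ [] := by
      obtain ⟨p, hp⟩ := hβ
      intro hnil
      exact p.ne (List.map_eq_nil_iff.mp (hnil ▸ hp))
    have hβpos : 0 < β.length := List.length_pos_iff.mpr hβne
    refine ⟨β.length, hβpos, hle, ?_⟩
    intro i hi
    have hm' : (finTake x m).length = m := aux_finTake_length x m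
    have hlen1 : m = β.length + α'.length := by
      rw [← hm', he1]; simp
    have hiα : i < α'.length := by omega
    have e1 : x (i + β.length) = α'[i]'hiα := by
      rw [← aux_finTake_getElem x m (i + β.length) (by omega), List.getElem_of_eq he1,
        List.getElem_append_right (by omega)]
      exact aux_getElem_congr α' (by omega) _ _
    have e2 : x i = α'[i]'hiα := by
      rw [← aux_finTake_getElem x m i (by omega), List.getElem_of_eq he2,
        List.getElem_append_left hiα]
    rw [e1, e2]
  -- a global period p with 1 ≤ p ≤ l
  have hgl : ∃ p, 0 < p ∧ p ≤ l ∧ ∀ i, x (i + p) = x i := by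
    by_contra hc
    push_neg at hc
    set f : ℕ → ℕ := fun p => if hp : ∃ i, x (i + p) ≠ x i then hp.choose else 0 with hf
    set I := (Finset.Icc 1 l).sup f with hI
    set m := max n (I + l + 1) with hm
    obtain ⟨p, hp1, hpl, hper⟩ := hshift m (le_max_left _ _) (by omega)
    obtain ⟨i, hi⟩ := hc p hp1 hpl
    have hex : ∃ i, x (i + p) ≠ x i := ⟨i, hi⟩
    have hfp : x (f p + p) ≠ x (f p) := by
      rw [hf]; simp only [dif_pos hex]; exact hex.choose_spec
    have hfle : f p ≤ I := Finset.le_sup (by simp only [Finset.mem_Icc]; omega)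
    exact hfp (hper (f p) (by omega))
  obtain ⟨p0, hp0, hp0l, hp0per⟩ := hgl
  -- the minimal period
  have hP : ∃ qq, 0 < qq ∧ ∀ i, x (i + qq) = x i := ⟨p0, hp0, hp0per⟩
  set qm := Nat.find hP with hqmdef
  obtain ⟨hqm1, hqmper⟩ := Nat.find_spec hP
  have hqml : qm ≤ l := le_trans (Nat.find_min' hP ⟨hp0, hp0per⟩) hp0l
  have hβlen : (finTake x qm).length = qm := aux_finTake_length x qm
  have hβne : finTake x qm ≠ [] := by
    intro hnil; rw [hnil] at hβlen; simp at hβlen; omega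
  refine ⟨finTake x qm, ?_, by rw [hβlen]; exact hqml, ⟨hβne, ?_⟩, hβne, ?_⟩
  · obtain ⟨p, hpl, hps, hplen⟩ := aux_prefix_path G qp qm hqm1
    exact ⟨p, by rw [hpl, hql]⟩
  · -- simplicity
    rintro ⟨δ, k, hδne, hδlt, hk1, hβeq⟩
    have hδpos : 0 < δ.length := List.length_pos_iff.mpr hδne
    have hqlen : qm = k * δ.length := by
      have h2 := congrArg List.length hβeq
      rwa [aux_finTake_length, aux_wpow_length] at h2
    have hdvd : δ.length ∣ qm := hqlen ▸ dvd_mul_left δ.length k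
    have g1 : ∀ j, x j = δ[j % δ.length]'(Nat.mod_lt _ hδpos) := by
      intro j
      rw [aux_mod_period x qm hqm1 hqmper j]
      have hjq : j % qm < (finTake x qm).length := by
        rw [aux_finTake_length]; exact Nat.mod_lt _ hqm1
      rw [← aux_finTake_getElem x qm (j % qm) hjq, List.getElem_of_eq hβeq,
        aux_wpow_getElem δ hδpos k]
      exact aux_getElem_congr δ (Nat.mod_mod_of_dvd _ hdvd) _ _
    have hper : ∀ i, x (i + δ.length) = x i := by
      intro i
      rw [g1 (i + δ.length), g1 i]
      exact aux_getElem_congr δ (by rw [Nat.add_mod_right]) _ _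
    exact Nat.find_min hP (by omega) ⟨hδpos, hper⟩
  · -- isPowInf
    intro nn
    simp only [List.get_eq_getElem]
    rw [aux_finTake_getElem, hβlen, ← aux_mod_period x qm hqm1 hqmper nn]
end
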